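/- arXiv:1709.00400 — 14 statements merged into one kernel-verified Lean document; each statement's English description precedes it below -/
import Mathlib

section
/- Let $x, k, y, n$ be positive integers satisfying $(x+1)^k + (x+2)^k + \cdots + (2x)^k = y^n$. If $x \equiv 0 \pmod{4}$ and either $k = 1$ or $k$ is even, then $n \le v_2(x) - 1$. -/
open Finset

/-- `T k x = (x+1)^k + (x+2)^k + ... + (2x)^k`. -/
def T (k x : ℕ) : ℕ := ∑ i ∈ Finset.Icc (x + 1) (2 * x), i ^ k

private lemma modeq_sum {n : ℕ} (s : Finset ℕ) (f g : ℕ → ℕ)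
    (h : ∀ i ∈ s, f i ≡ g i [MOD n]) :
    (∑ i ∈ s, f i) ≡ (∑ i ∈ s, g i) [MOD n] := by
  induction s using Finset.induction_on with
  | empty => rfl
  | @insert a s hi ih =>
    rw [Finset.sum_insert hi, Finset.sum_insert hi]
    exact (h a (Finset.mem_insert_self a s)).add
      (ih fun i his => h i (Finset.mem_insert_of_mem his))

/-- From `D ≡ 2^v [MOD 2^(v+1)]` extract `D = 2^v * (2c+1)`. -/
private lemma eq_factor_of_modeq {v D : ℕ} (h : D ≡ 2 ^ v [MOD 2 ^ (v + 1)]) :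
    ∃ c, D = 2 ^ v * (2 * c + 1) := by
  have hlt : (2 : ℕ) ^ v < 2 ^ (v + 1) := by
    have : (2:ℕ)^(v+1) = 2 * 2^v := by ring
    have := pow_pos (show (0:ℕ) < 2 by norm_num) v
    omega
  unfold Nat.ModEq at h
  rw [Nat.mod_eq_of_lt hlt] at h
  refine ⟨D / 2 ^ (v + 1), ?_⟩
  have hD := Nat.div_add_mod D (2 ^ (v + 1))
  rw [h] at hD
  rw [show (2:ℕ) ^ v * (2 * (D / 2 ^ (v + 1)) + 1) = 2 ^ (v+1) * (D / 2 ^ (v + 1)) + 2 ^ v from by ring]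
  omega

/-- `(2^N - a)^(2t) ≡ a^(2t) [MOD 2^(N+1)]` for `a ≤ 2^N`, `N ≥ 1`. -/
private lemma pair_pow (N t a : ℕ) (hN : 1 ≤ N) (ha : a ≤ 2 ^ N) :
    (2 ^ N - a) ^ (2 * t) ≡ a ^ (2 * t) [MOD 2 ^ (N + 1)] := by
  obtain ⟨M, rfl⟩ : ∃ M, N = M + 1 := ⟨N - 1, by omega⟩
  rw [← ZMod.natCast_eq_natCast_iff]
  push_cast [Nat.cast_sub ha]
  rw [pow_mul, pow_mul]
  congr 1
  have h0 : ((2 : ZMod (2 ^ (M + 2)))) ^ (M + 2) = 0 := by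
    have := ZMod.natCast_self (2 ^ (M + 2))
    push_cast at this
    exact this
  have e : ((2 : ZMod (2 ^ (M + 2))) ^ (M + 1) - (a : ZMod (2 ^ (M + 2)))) ^ 2
      = (a : ZMod (2 ^ (M + 2))) ^ 2 + (2 : ZMod (2 ^ (M + 2))) ^ (M + 2) * (2 ^ M - a) := by
    ring
  rw [e, h0, zero_mul, add_zero]

/-- Sum of `(2j+1)^(2t)` over odd numbers below `2^m`. -/
private lemma O_cong (t : ℕ) : ∀ m, 1 ≤ m →
    (∑ j ∈ range (2 ^ (m - 1)), (2 * j + 1) ^ (2 * t)) ≡ 2 ^ (m - 1) [MOD 2 ^ (m + 1)] := by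
  intro m hm
  induction m, hm using Nat.le_induction with
  | base => simpa using Nat.ModEq.refl 1
  | succ m hm ih =>
    simp only [Nat.add_sub_cancel] at *
    obtain ⟨M, rfl⟩ : ∃ M, m = M + 1 := ⟨m - 1, by omega⟩
    simp only [Nat.add_sub_cancel] at ih
    have hP : (0 : ℕ) < 2 ^ M := pow_pos (by norm_num) M
    have h4 : (2:ℕ) ^ (M + 2) = 4 * 2 ^ M := by ring
    calc (∑ j ∈ range (2 ^ (M + 1)), (2 * j + 1) ^ (2 * t))
        = ∑ j ∈ range (2 ^ M), (2 * j + 1) ^ (2 * t)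
          + ∑ j ∈ range (2 ^ M), (2 * (2 ^ M + j) + 1) ^ (2 * t) := by
          rw [show (2:ℕ) ^ (M + 1) = 2 ^ M + 2 ^ M from by ring, Finset.sum_range_add]
      _ = ∑ j ∈ range (2 ^ M), (2 * j + 1) ^ (2 * t)
          + ∑ j ∈ range (2 ^ M), (2 * (2 ^ M + (2 ^ M - 1 - j)) + 1) ^ (2 * t) := by
          rw [Finset.sum_range_reflect (fun j => (2 * (2 ^ M + j) + 1) ^ (2 * t)) (2 ^ M)]
      _ ≡ ∑ j ∈ range (2 ^ M), (2 * j + 1) ^ (2 * t)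
          + ∑ j ∈ range (2 ^ M), (2 * j + 1) ^ (2 * t) [MOD 2 ^ (M + 3)] := by
          refine Nat.ModEq.add_left _ (modeq_sum _ _ _ fun j hj => ?_)
          rw [Finset.mem_range] at hj
          have harg : 2 * (2 ^ M + (2 ^ M - 1 - j)) + 1 = 2 ^ (M + 2) - (2 * j + 1) := by omega
          rw [harg]
          exact pair_pow (M + 2) t (2 * j + 1) (by omega) (by omega)
      _ = 2 * ∑ j ∈ range (2 ^ M), (2 * j + 1) ^ (2 * t) := by ring
      _ ≡ 2 * 2 ^ M [MOD 2 ^ (M + 3)] := by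
          have h := Nat.ModEq.mul_left' 2 ih
          rwa [show 2 * 2 ^ (M + 2) = 2 ^ (M + 3) from by ring] at h
      _ = 2 ^ (M + 1) := by ring

private lemma sum_range_even_odd (f : ℕ → ℕ) (N : ℕ) :
    ∑ j ∈ range (2 * N), f j
      = ∑ j ∈ range N, f (2 * j) + ∑ j ∈ range N, f (2 * j + 1) := by
  induction N with
  | zero => simp
  | succ N ih =>
    rw [show 2 * (N + 1) = 2 * N + 1 + 1 from by ring, Finset.sum_range_succ,
      Finset.sum_range_succ, Finset.sum_range_succ, Finset.sum_range_succ, ih]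
    ring

/-- `∑_{j < 2^m} j^(2t) ≡ 2^(m-1) [MOD 2^m]` for `t ≥ 1`, `m ≥ 1`. -/
private lemma S_cong_even (t : ℕ) (ht : 1 ≤ t) : ∀ m, 1 ≤ m →
    (∑ j ∈ range (2 ^ m), j ^ (2 * t)) ≡ 2 ^ (m - 1) [MOD 2 ^ m] := by
  intro m hm
  induction m, hm using Nat.le_induction with
  | base =>
    have : (∑ j ∈ range (2 ^ 1), j ^ (2 * t)) = 1 := by
      rw [show (2:ℕ)^1 = 2 from rfl]
      rw [Finset.sum_range_succ, Finset.sum_range_succ, Finset.sum_range_zero]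
      rw [zero_pow (by omega), one_pow]
      omega
    rw [this]
    exact Nat.ModEq.refl 1
  | succ m hm ih =>
    simp only [Nat.add_sub_cancel]
    -- split even/odd
    have hsplit : (∑ j ∈ range (2 ^ (m + 1)), j ^ (2 * t))
        = 2 ^ (2 * t) * (∑ j ∈ range (2 ^ m), j ^ (2 * t))
          + ∑ j ∈ range (2 ^ m), (2 * j + 1) ^ (2 * t) := by
      rw [show (2:ℕ) ^ (m + 1) = 2 * 2 ^ m from by ring, sum_range_even_odd, Finset.mul_sum]
      congr 1
      exact Finset.sum_congr rfl fun j _ => by rw [mul_pow]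
    rw [hsplit]
    -- even part divisible by 2^(m+1)
    have hdvd : 2 ^ (m - 1) ∣ ∑ j ∈ range (2 ^ m), j ^ (2 * t) := by
      obtain ⟨M, rfl⟩ : ∃ M, m = M + 1 := ⟨m - 1, by omega⟩
      simp only [Nat.add_sub_cancel] at ih ⊢
      obtain ⟨c, hc⟩ := eq_factor_of_modeq ih
      exact ⟨2 * c + 1, hc⟩
    have heven : (2 ^ (2 * t) * ∑ j ∈ range (2 ^ m), j ^ (2 * t)) ≡ 0 [MOD 2 ^ (m + 1)] := by
      rw [Nat.modEq_zero_iff_dvd]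
      obtain ⟨c, hc⟩ := hdvd
      rw [hc, ← mul_assoc]
      refine Dvd.dvd.mul_right ?_ c
      have : 2 ^ (2 * t) * 2 ^ (m - 1) = 2 ^ (m + 1) * 2 ^ (2 * t + (m - 1) - (m + 1)) := by
        rw [← pow_add, ← pow_add]
        congr 1
        omega
      rw [this]
      exact Dvd.intro _ rfl
    have hodd : (∑ j ∈ range (2 ^ m), (2 * j + 1) ^ (2 * t)) ≡ 2 ^ m [MOD 2 ^ (m + 1)] := by
      have h := O_cong t (m + 1) (by omega)
      simp only [Nat.add_sub_cancel] at h
      exact Nat.ModEq.of_dvd (pow_dvd_pow 2 (by omega)) h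
    calc 2 ^ (2 * t) * (∑ j ∈ range (2 ^ m), j ^ (2 * t))
          + ∑ j ∈ range (2 ^ m), (2 * j + 1) ^ (2 * t)
        ≡ 0 + 2 ^ m [MOD 2 ^ (m + 1)] := heven.add hodd
      _ = 2 ^ m := by ring

/-- `∑_{j < 2^m} j^1 ≡ 2^(m-1) [MOD 2^m]` for `m ≥ 1`. -/
private lemma S_cong_one (m : ℕ) (hm : 1 ≤ m) :
    (∑ j ∈ range (2 ^ m), j ^ 1) ≡ 2 ^ (m - 1) [MOD 2 ^ m] := by
  obtain ⟨M, rfl⟩ : ∃ M, m = M + 1 := ⟨m - 1, by omega⟩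
  simp only [Nat.add_sub_cancel, pow_one]
  have h := Finset.sum_range_id_mul_two (2 ^ (M + 1))
  have h2 : 2 ^ M * (2 ^ (M + 1) - 1) * 2 = 2 ^ (M + 1) * (2 ^ (M + 1) - 1) := by ring
  have hsum : (∑ i ∈ range (2 ^ (M + 1)), i) = 2 ^ M * (2 ^ (M + 1) - 1) :=
    Nat.eq_of_mul_eq_mul_right (by norm_num) (h.trans h2.symm)
  rw [hsum]
  have hodd : (2 ^ (M + 1) - 1) ≡ 1 [MOD 2] := by
    have : (2:ℕ) ^ (M + 1) = 2 * 2 ^ M := by ring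
    have hP : (0:ℕ) < 2 ^ M := pow_pos (by norm_num) M
    unfold Nat.ModEq
    omega
  have := Nat.ModEq.mul_left' (2 ^ M) hodd
  rwa [show (2:ℕ) ^ M * 2 = 2 ^ (M + 1) from by ring, mul_one] at this

/-- blocks: `∑_{j < q*c} j^k ≡ c * ∑_{j<q} j^k [MOD q]`. -/
private lemma sum_blocks (q c k : ℕ) :
    (∑ j ∈ range (q * c), j ^ k) ≡ c * ∑ j ∈ range q, j ^ k [MOD q] := by
  induction c with
  | zero => simp; rfl
  | succ c ih =>
    rw [Nat.mul_succ, Finset.sum_range_add]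
    have h2 : (∑ j ∈ range q, (q * c + j) ^ k) ≡ ∑ j ∈ range q, j ^ k [MOD q] := by
      refine modeq_sum _ _ _ fun j _ => Nat.ModEq.pow k ?_
      calc q * c + j ≡ 0 + j [MOD q] :=
            Nat.ModEq.add_right j ((Nat.modEq_zero_iff_dvd).2 ⟨c, rfl⟩)
        _ = j := by ring
    calc (∑ j ∈ range (q * c), j ^ k) + ∑ j ∈ range q, (q * c + j) ^ k
        ≡ c * (∑ j ∈ range q, j ^ k) + ∑ j ∈ range q, j ^ k [MOD q] := ih.add h2
      _ = (c + 1) * ∑ j ∈ range q, j ^ k := by ring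

theorem stmt_0 (x k y n : ℕ) (hx : 0 < x) (hk : 0 < k) (hy : 0 < y) (hn : 0 < n)
    (heq : T k x = y ^ n) (hx4 : x % 4 = 0) (hk1 : k = 1 ∨ Even k) :
    n ≤ padicValNat 2 x - 1 := by
  have hx0 : x ≠ 0 := hx.ne'
  set v := padicValNat 2 x with hv
  have hfac : x.factorization 2 = v := Nat.factorization_def x (by norm_num)
  have hv2 : 2 ≤ v := by
    have h4 : (2:ℕ) ^ 2 ∣ x := by
      rw [show (2:ℕ)^2 = 4 from rfl]
      omega
    have := (Nat.Prime.pow_dvd_iff_le_factorization (by norm_num) hx0).1 h4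
    omega
  have hqdvd : 2 ^ v ∣ x := by rw [hv]; exact pow_padicValNat_dvd
  set c := x / 2 ^ v with hc
  have hxc : x = 2 ^ v * c := (Nat.mul_div_cancel' hqdvd).symm
  have hcodd : ¬ 2 ∣ c := by
    have := Nat.not_dvd_ordCompl (p := 2) (n := x) (by norm_num) hx0
    rwa [hfac] at this
  -- S congruence
  have hS : (∑ j ∈ range (2 ^ v), j ^ k) ≡ 2 ^ (v - 1) [MOD 2 ^ v] := by
    rcases hk1 with rfl | ⟨t, ht⟩
    · exact S_cong_one v (by omega)
    · have hk2 : k = 2 * t := by omega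
      rw [hk2]
      exact S_cong_even t (by omega) v (by omega)
  -- T ≡ 2^(v-1) [MOD 2^v]
  have hT : T k x ≡ 2 ^ (v - 1) [MOD 2 ^ v] := by
    have hT1 : T k x = ∑ j ∈ range x, (x + 1 + j) ^ k := by
      rw [T, ← Finset.Ico_add_one_right_eq_Icc, Finset.sum_Ico_eq_sum_range,
        show 2 * x + 1 - (x + 1) = x from by omega]
    have hstep1 : (∑ j ∈ range x, (x + 1 + j) ^ k) ≡ ∑ j ∈ range x, (j + 1) ^ k [MOD 2 ^ v] := by
      refine modeq_sum _ _ _ fun j _ => Nat.ModEq.pow k ?_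
      calc x + 1 + j = x + (j + 1) := by ring
        _ ≡ 0 + (j + 1) [MOD 2 ^ v] :=
            Nat.ModEq.add_right _ ((Nat.modEq_zero_iff_dvd).2 hqdvd)
        _ = j + 1 := by ring
    have hstep2 : (∑ j ∈ range x, (j + 1) ^ k) = (∑ j ∈ range x, j ^ k) + x ^ k := by
      have h1 := Finset.sum_range_succ' (fun j => j ^ k) x
      have h2 := Finset.sum_range_succ (fun j => j ^ k) x
      rw [zero_pow hk.ne', add_zero] at h1
      omega
    have hstep3 : x ^ k ≡ 0 [MOD 2 ^ v] :=
      (Nat.modEq_zero_iff_dvd).2 (hqdvd.trans (dvd_pow_self x hk.ne'))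
    have hstep4 : (∑ j ∈ range x, j ^ k) ≡ c * ∑ j ∈ range (2 ^ v), j ^ k [MOD 2 ^ v] := by
      rw [hxc]
      exact sum_blocks (2 ^ v) c k
    have hstep5 : c * (2:ℕ) ^ (v - 1) ≡ 2 ^ (v - 1) [MOD 2 ^ v] := by
      have hcc : c ≡ 1 [MOD 2] := by unfold Nat.ModEq; omega
      have := Nat.ModEq.mul_right' (2 ^ (v - 1)) hcc
      rwa [show 2 * 2 ^ (v - 1) = 2 ^ v from by
        rw [← pow_succ']; congr 1; omega, one_mul] at this
    calc T k x = ∑ j ∈ range x, (x + 1 + j) ^ k := hT1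
      _ ≡ ∑ j ∈ range x, (j + 1) ^ k [MOD 2 ^ v] := hstep1
      _ = (∑ j ∈ range x, j ^ k) + x ^ k := hstep2
      _ ≡ (c * ∑ j ∈ range (2 ^ v), j ^ k) + 0 [MOD 2 ^ v] := hstep4.add hstep3
      _ = c * ∑ j ∈ range (2 ^ v), j ^ k := by ring
      _ ≡ c * 2 ^ (v - 1) [MOD 2 ^ v] := Nat.ModEq.mul_left c hS
      _ ≡ 2 ^ (v - 1) [MOD 2 ^ v] := hstep5
  -- extract valuation
  obtain ⟨V, hV⟩ : ∃ V, v = V + 1 := ⟨v - 1, by omega⟩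
  rw [hV, Nat.add_sub_cancel] at hT
  obtain ⟨e, he⟩ := eq_factor_of_modeq hT
  have hvalT : padicValNat 2 (T k x) = V := by
    rw [he, padicValNat.mul (pow_ne_zero V (by norm_num)) (by omega),
      padicValNat.prime_pow, padicValNat.eq_zero_of_not_dvd (by omega), add_zero]
  rw [heq, padicValNat.pow y n] at hvalT
  have hy2 : 1 ≤ padicValNat 2 y := by
    by_contra h
    have : padicValNat 2 y = 0 := by omega
    rw [this, mul_zero] at hvalT
    omega
  calc n = n * 1 := (mul_one n).symm
    _ ≤ n * padicValNat 2 y := Nat.mul_le_mul_left n hy2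
    _ = V := hvalT
    _ = v - 1 := by omega
end

section
/- Let $x, k, y, n$ be positive integers satisfying $(x+1)^k + (x+2)^k + \cdots + (2x)^k = y^n$. If $x \equiv 0 \pmod{4}$ and $k \ge 3$ is odd, then $n \le 2 v_2(x) - 2$. -/
lemma sq_zero_add_pow {R : Type*} [CommRing R] (x : R) (h : x ^ 2 = 0) (y : R) (k : ℕ) :
    (x + y) ^ (k + 1) = y ^ (k + 1) + ((k : R) + 1) * x * y ^ k := by
  induction k with
  | zero => simp; ring
  | succ m ih =>
      rw [pow_succ, ih]
      push_cast
      linear_combination ((m : R) + 1) * y ^ m * h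

lemma helperA (d : ℕ) : ∀ w : ℕ,
    (∑ j ∈ Finset.range (2 ^ (w + 1)), j ^ (2 * d + 2)) ≡ 2 ^ w [MOD 2 ^ (w + 1)] := by
  intro w
  induction w with
  | zero =>
      simp [Finset.sum_range_succ]
      rfl
  | succ w ih =>
      show (∑ j ∈ Finset.range (2 ^ (w + 2)), j ^ (2 * d + 2)) ≡ 2 ^ (w + 1) [MOD 2 ^ (w + 2)]
      have hsplit : (2 : ℕ) ^ (w + 2) = 2 ^ (w + 1) + 2 ^ (w + 1) := by ring
      have hsum : (∑ j ∈ Finset.range (2 ^ (w + 2)), j ^ (2 * d + 2)) =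
          (∑ j ∈ Finset.range (2 ^ (w + 1)), j ^ (2 * d + 2)) +
            ∑ j ∈ Finset.range (2 ^ (w + 1)), (2 ^ (w + 1) + j) ^ (2 * d + 2) := by
        rw [hsplit, Finset.sum_range_add]
      rw [hsum]
      have hc : (∑ j ∈ Finset.range (2 ^ (w + 1)), (2 ^ (w + 1) + j) ^ (2 * d + 2)) ≡
          (∑ j ∈ Finset.range (2 ^ (w + 1)), j ^ (2 * d + 2)) [MOD 2 ^ (w + 2)] := by
        rw [← ZMod.natCast_eq_natCast_iff]
        push_cast
        refine Finset.sum_congr rfl fun j _ => ?_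
        have hz : ((2 : ZMod (2 ^ (w + 2))) ^ (w + 2)) = 0 := by
          have := ZMod.natCast_self (2 ^ (w + 2))
          push_cast at this
          exact this
        have ht2 : ((2 : ZMod (2 ^ (w + 2))) ^ (w + 1)) ^ 2 = 0 := by
          calc ((2 : ZMod (2 ^ (w + 2))) ^ (w + 1)) ^ 2 = 2 ^ (w + 2) * 2 ^ w := by ring
            _ = 0 := by rw [hz, zero_mul]
        rw [show 2 * d + 2 = (2 * d + 1) + 1 from rfl, sq_zero_add_pow _ ht2]
        push_cast
        linear_combination ((d : ZMod (2 ^ (w + 2))) + 1) *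
          (j : ZMod (2 ^ (w + 2))) ^ (2 * d + 1) * hz
      have h2f : 2 * (∑ j ∈ Finset.range (2 ^ (w + 1)), j ^ (2 * d + 2)) ≡ 2 ^ (w + 1)
          [MOD 2 ^ (w + 2)] := by
        have h := Nat.ModEq.mul_left' (c := 2) ih
        have e1 : 2 * (2 : ℕ) ^ w = 2 ^ (w + 1) := by ring
        have e2 : 2 * (2 : ℕ) ^ (w + 1) = 2 ^ (w + 2) := by ring
        rwa [e1, e2] at h
      calc (∑ j ∈ Finset.range (2 ^ (w + 1)), j ^ (2 * d + 2)) +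
            (∑ j ∈ Finset.range (2 ^ (w + 1)), (2 ^ (w + 1) + j) ^ (2 * d + 2))
          ≡ (∑ j ∈ Finset.range (2 ^ (w + 1)), j ^ (2 * d + 2)) +
            (∑ j ∈ Finset.range (2 ^ (w + 1)), j ^ (2 * d + 2)) [MOD 2 ^ (w + 2)] :=
            Nat.ModEq.add_left _ hc
        _ = 2 * (∑ j ∈ Finset.range (2 ^ (w + 1)), j ^ (2 * d + 2)) := by ring
        _ ≡ 2 ^ (w + 1) [MOD 2 ^ (w + 2)] := h2f

lemma helperB (d s : ℕ) : ∀ m : ℕ,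
    (∑ j ∈ Finset.range (2 ^ s * m), j ^ (2 * d + 2)) ≡
      m * ∑ j ∈ Finset.range (2 ^ s), j ^ (2 * d + 2) [MOD 2 ^ s] := by
  intro m
  induction m with
  | zero =>
      simp
      rfl
  | succ m ih =>
      rw [Nat.mul_succ, Finset.sum_range_add]
      have hc : (∑ j ∈ Finset.range (2 ^ s), (2 ^ s * m + j) ^ (2 * d + 2)) ≡
          (∑ j ∈ Finset.range (2 ^ s), j ^ (2 * d + 2)) [MOD 2 ^ s] := by
        rw [← ZMod.natCast_eq_natCast_iff]
        push_cast
        refine Finset.sum_congr rfl fun j _ => ?_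
        have hz : ((2 : ZMod (2 ^ s)) ^ s) = 0 := by
          have := ZMod.natCast_self (2 ^ s)
          push_cast at this
          exact this
        rw [hz, zero_mul, zero_add]
      calc (∑ j ∈ Finset.range (2 ^ s * m), j ^ (2 * d + 2)) +
            (∑ j ∈ Finset.range (2 ^ s), (2 ^ s * m + j) ^ (2 * d + 2))
          ≡ m * (∑ j ∈ Finset.range (2 ^ s), j ^ (2 * d + 2)) +
            (∑ j ∈ Finset.range (2 ^ s), j ^ (2 * d + 2)) [MOD 2 ^ s] := ih.add hc
        _ = (m + 1) * ∑ j ∈ Finset.range (2 ^ s), j ^ (2 * d + 2) := by ring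

theorem stmt_1 (x k y n : ℕ) (hx : 0 < x) (hk : 0 < k) (hy : 0 < y) (hn : 0 < n)
    (heq : T k x = y ^ n) (hx4 : x % 4 = 0) (hk3 : 3 ≤ k) (hkodd : Odd k) :
    n ≤ 2 * padicValNat 2 x - 2 := by
  haveI : Fact (Nat.Prime 2) := ⟨Nat.prime_two⟩
  have hxne : x ≠ 0 := hx.ne'
  set v := padicValNat 2 x with hv
  have hv2 : 2 ≤ v := by
    have h4 : (2 : ℕ) ^ 2 ∣ x := by
      rw [show (2 : ℕ) ^ 2 = 4 by norm_num]
      omega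
    rcases (padicValNat_dvd_iff 2 x).mp h4 with h | h
    · exact absurd h hxne
    · exact h
  obtain ⟨u, hu⟩ : ∃ u, v = u + 2 := ⟨v - 2, by omega⟩
  set m := x / 2 ^ v with hm
  have hxm : x = 2 ^ v * m := by
    rw [hm, hv, ← Nat.factorization_def x Nat.prime_two]
    exact (Nat.ordProj_mul_ordCompl_eq_self x 2).symm
  have hmodd : ¬ 2 ∣ m := by
    rw [hm, hv, ← Nat.factorization_def x Nat.prime_two]
    exact Nat.not_dvd_ordCompl Nat.prime_two hxne
  obtain ⟨d, hk2⟩ : ∃ d, k = 2 * d + 3 := by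
    obtain ⟨K, hK⟩ := hkodd; exact ⟨K - 1, by omega⟩
  subst hk2
  set N := 2 ^ (2 * u + 4) with hN
  set S1 := ∑ j ∈ Finset.range x, (j + 1) ^ (2 * d + 3) with hS1def
  set S2 := ∑ j ∈ Finset.range x, (j + 1) ^ (2 * d + 2) with hS2def
  have hvpow : x = 2 ^ (u + 2) * m := by rw [← hu]; exact hxm
  -- x^2 = 0 in ZMod N
  have hx2 : ((x : ZMod N)) ^ 2 = 0 := by
    have hxx : (x : ℕ) ^ 2 = 2 ^ (2 * u + 4) * m ^ 2 := by rw [hvpow]; ring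
    calc ((x : ZMod N)) ^ 2 = ((x ^ 2 : ℕ) : ZMod N) := by push_cast; ring
      _ = ((2 ^ (2 * u + 4) * m ^ 2 : ℕ) : ZMod N) := by rw [hxx]
      _ = 0 := by rw [Nat.cast_mul, hN, ZMod.natCast_self, zero_mul]
  -- nat shift identity
  have hnat : ∀ e : ℕ, 2 ≤ e →
      (∑ j ∈ Finset.range x, (j + 1) ^ e) = (∑ j ∈ Finset.range x, j ^ e) + x ^ e := by
    intro e he
    have h1 := Finset.sum_range_succ' (fun j => j ^ e) x
    have h2 := Finset.sum_range_succ (fun j => j ^ e) x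
    simp only [zero_pow (show e ≠ 0 by omega), add_zero] at h1
    rw [← h1]
    exact h2
  -- shift lemma for ZMod sums
  have hshift : ∀ e : ℕ, 2 ≤ e →
      (∑ j ∈ Finset.range x, ((j : ZMod N)) ^ e) =
        ((∑ j ∈ Finset.range x, (j + 1) ^ e : ℕ) : ZMod N) := by
    intro e he
    have hx0 : ((x : ZMod N)) ^ e = 0 := by
      rw [show e = 2 + (e - 2) by omega, pow_add, hx2, zero_mul]
    rw [hnat e he]
    push_cast
    rw [hx0, add_zero]
  -- cast identities for S1, S2
  have hcastS1 : ((S1 : ℕ) : ZMod N) =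
      ∑ j ∈ Finset.range x, ((j : ZMod N) + 1) ^ (2 * d + 3) := by
    rw [hS1def]; push_cast; rfl
  have hcastS2 : ((S2 : ℕ) : ZMod N) =
      ∑ j ∈ Finset.range x, ((j : ZMod N) + 1) ^ (2 * d + 2) := by
    rw [hS2def]; push_cast; rfl
  -- T as a range sum
  have hTsum : T (2 * d + 3) x = ∑ j ∈ Finset.range x, (x + (j + 1)) ^ (2 * d + 3) := by
    unfold T
    rw [← Finset.Ico_add_one_right_eq_Icc, Finset.sum_Ico_eq_sum_range]
    rw [show 2 * x + 1 - (x + 1) = x by omega]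
    refine Finset.sum_congr rfl fun j _ => ?_
    congr 1
    omega
  -- T ≡ S1 + k x S2 in ZMod N
  have hT : ((T (2 * d + 3) x : ℕ) : ZMod N) =
      (S1 : ZMod N) + (2 * (d : ZMod N) + 3) * (x : ZMod N) * (S2 : ZMod N) := by
    rw [hTsum, Nat.cast_sum, hcastS1, hcastS2, Finset.mul_sum, ← Finset.sum_add_distrib]
    refine Finset.sum_congr rfl fun j _ => ?_
    push_cast
    rw [show 2 * d + 3 = (2 * d + 2) + 1 from rfl, sq_zero_add_pow _ hx2]
    push_cast
    ring
  -- reflection: S1 as reversed sum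
  have hS1refl : S1 = ∑ j ∈ Finset.range x, (x - j) ^ (2 * d + 3) := by
    rw [hS1def, ← Finset.sum_range_reflect (fun j => (j + 1) ^ (2 * d + 3)) x]
    refine Finset.sum_congr rfl fun j hj => ?_
    have := Finset.mem_range.mp hj
    congr 1
    omega
  -- 2 S1 = k x S2 in ZMod N
  have key2 : (S1 : ZMod N) + (S1 : ZMod N) =
      (2 * (d : ZMod N) + 3) * (x : ZMod N) * (S2 : ZMod N) := by
    nth_rewrite 1 [hS1refl]
    have hcast : ((∑ j ∈ Finset.range x, (x - j) ^ (2 * d + 3) : ℕ) : ZMod N) =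
        ∑ j ∈ Finset.range x, ((x : ZMod N) - (j : ZMod N)) ^ (2 * d + 3) := by
      rw [Nat.cast_sum]
      refine Finset.sum_congr rfl fun j hj => ?_
      rw [Nat.cast_pow, Nat.cast_sub (le_of_lt (Finset.mem_range.mp hj))]
    rw [hcast]
    have hterm : ∀ j ∈ Finset.range x, ((x : ZMod N) - (j : ZMod N)) ^ (2 * d + 3) =
        -((j : ZMod N) ^ (2 * d + 3)) +
          (2 * (d : ZMod N) + 3) * (x : ZMod N) * ((j : ZMod N) ^ (2 * d + 2)) := by
      intro j _
      have h1 : ((x : ZMod N) - (j : ZMod N)) = (x : ZMod N) + (-(j : ZMod N)) := by ring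
      rw [h1, show 2 * d + 3 = (2 * d + 2) + 1 from rfl, sq_zero_add_pow _ hx2]
      rw [Odd.neg_pow ⟨d + 1, by ring⟩, Even.neg_pow ⟨d + 1, by ring⟩]
      push_cast
      ring
    rw [Finset.sum_congr rfl hterm, Finset.sum_add_distrib, Finset.sum_neg_distrib,
      ← Finset.mul_sum]
    rw [hshift (2 * d + 3) (by omega), hshift (2 * d + 2) (by omega), ← hS1def, ← hS2def]
    ring
  -- nat-level congruences
  have key2n : 2 * S1 ≡ (2 * d + 3) * x * S2 [MOD N] := by
    rw [← ZMod.natCast_eq_natCast_iff]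
    push_cast
    linear_combination key2
  have hT3 : T (2 * d + 3) x ≡ 3 * S1 [MOD N] := by
    rw [← ZMod.natCast_eq_natCast_iff]
    push_cast
    rw [hT]
    linear_combination -key2
  -- S2 mod 2^(u+2)
  have hS2mod : S2 ≡ 2 ^ (u + 1) [MOD 2 ^ (u + 2)] := by
    have hB : (∑ j ∈ Finset.range (2 ^ (u + 2) * m), j ^ (2 * d + 2)) ≡
        m * ∑ j ∈ Finset.range (2 ^ (u + 2)), j ^ (2 * d + 2) [MOD 2 ^ (u + 2)] :=
      helperB d (u + 2) m
    rw [← hvpow] at hB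
    have hA : (∑ j ∈ Finset.range (2 ^ (u + 2)), j ^ (2 * d + 2)) ≡ 2 ^ (u + 1)
        [MOD 2 ^ (u + 2)] := helperA d (u + 1)
    have hmf : m * (∑ j ∈ Finset.range (2 ^ (u + 2)), j ^ (2 * d + 2)) ≡ m * 2 ^ (u + 1)
        [MOD 2 ^ (u + 2)] := hA.mul_left m
    obtain ⟨a, ha⟩ : ∃ a, m = 2 * a + 1 := ⟨m / 2, by omega⟩
    have hms : m * 2 ^ (u + 1) ≡ 2 ^ (u + 1) [MOD 2 ^ (u + 2)] := by
      have hE : m * 2 ^ (u + 1) = 2 ^ (u + 2) * a + 2 ^ (u + 1) := by rw [ha]; ring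
      rw [hE]
      exact Nat.mul_add_mod _ _ _
    have hxp : x ^ (2 * d + 2) ≡ 0 [MOD 2 ^ (u + 2)] :=
      (Nat.modEq_zero_iff_dvd).mpr (dvd_trans ⟨m, hvpow⟩ (dvd_pow_self x (by omega)))
    have hsum := (hB.add hxp)
    rw [add_zero] at hsum
    rw [hS2def, hnat (2 * d + 2) (by omega)]
    exact hsum.trans (hmf.trans hms)
  -- S2 = 2^(u+2) q + 2^(u+1)
  obtain ⟨q, hq⟩ : ∃ q, S2 = 2 ^ (u + 2) * q + 2 ^ (u + 1) := by
    refine ⟨S2 / 2 ^ (u + 2), ?_⟩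
    have hlt : (2 : ℕ) ^ (u + 1) < 2 ^ (u + 2) := Nat.pow_lt_pow_right one_lt_two (by omega)
    have hmod : S2 % 2 ^ (u + 2) = 2 ^ (u + 1) % 2 ^ (u + 2) := hS2mod
    rw [Nat.mod_eq_of_lt hlt] at hmod
    rw [← hmod]
    exact (Nat.div_add_mod _ _).symm
  -- k x S2 ≡ 2^(2u+3)
  have hodd : Odd ((2 * d + 3) * m * (2 * q + 1)) := by
    have hm1 : Odd m := Nat.odd_iff.mpr (by omega)
    have o1 : Odd (2 * d + 3) := ⟨d + 1, by ring⟩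
    have o3 : Odd (2 * q + 1) := ⟨q, by ring⟩
    exact (o1.mul hm1).mul o3
  obtain ⟨r, hr⟩ := hodd
  have hkxs : (2 * d + 3) * x * S2 = 2 ^ (2 * u + 3) * (2 * r + 1) := by
    rw [hvpow, hq, ← hr]; ring
  have hkxmod : (2 * d + 3) * x * S2 ≡ 2 ^ (2 * u + 3) [MOD N] := by
    rw [hkxs, hN]
    rw [show 2 ^ (2 * u + 3) * (2 * r + 1) = 2 ^ (2 * u + 4) * r + 2 ^ (2 * u + 3) by ring]
    exact Nat.mul_add_mod _ _ _
  -- S1 ≡ 2^(2u+2) mod 2^(2u+3)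
  have h2S1 : 2 * S1 ≡ 2 ^ (2 * u + 3) [MOD N] := key2n.trans hkxmod
  have hS1mod : S1 ≡ 2 ^ (2 * u + 2) [MOD 2 ^ (2 * u + 3)] := by
    rw [show (2 : ℕ) ^ (2 * u + 3) = 2 * 2 ^ (2 * u + 2) by ring] at h2S1
    rw [show N = 2 * 2 ^ (2 * u + 3) by rw [hN]; ring] at h2S1
    exact Nat.ModEq.mul_left_cancel' two_ne_zero h2S1
  -- T ≡ 2^(2u+2) mod 2^(2u+3)
  have hTmod : T (2 * d + 3) x ≡ 2 ^ (2 * u + 2) [MOD 2 ^ (2 * u + 3)] := by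
    have hdvd : (2 : ℕ) ^ (2 * u + 3) ∣ N := by
      rw [hN]; exact pow_dvd_pow 2 (by omega)
    have h1 : T (2 * d + 3) x ≡ 3 * S1 [MOD 2 ^ (2 * u + 3)] := Nat.ModEq.of_dvd hdvd hT3
    have h2 : 3 * S1 ≡ 3 * 2 ^ (2 * u + 2) [MOD 2 ^ (2 * u + 3)] := hS1mod.mul_left 3
    have h3 : 3 * 2 ^ (2 * u + 2) ≡ 2 ^ (2 * u + 2) [MOD 2 ^ (2 * u + 3)] := by
      rw [show 3 * 2 ^ (2 * u + 2) = 2 ^ (2 * u + 3) * 1 + 2 ^ (2 * u + 2) by ring]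
      exact Nat.mul_add_mod _ _ _
    exact (h1.trans h2).trans h3
  obtain ⟨s, hsT⟩ : ∃ s, T (2 * d + 3) x = 2 ^ (2 * u + 3) * s + 2 ^ (2 * u + 2) := by
    refine ⟨T (2 * d + 3) x / 2 ^ (2 * u + 3), ?_⟩
    have hlt : (2 : ℕ) ^ (2 * u + 2) < 2 ^ (2 * u + 3) :=
      Nat.pow_lt_pow_right one_lt_two (by omega)
    have hmod : T (2 * d + 3) x % 2 ^ (2 * u + 3) = 2 ^ (2 * u + 2) % 2 ^ (2 * u + 3) := hTmod
    rw [Nat.mod_eq_of_lt hlt] at hmod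
    rw [← hmod]
    exact (Nat.div_add_mod _ _).symm
  rw [heq] at hsT
  have hyeq : y ^ n = 2 ^ (2 * u + 2) * (2 * s + 1) := by rw [hsT]; ring
  have hval : padicValNat 2 (y ^ n) = 2 * u + 2 := by
    rw [hyeq, padicValNat.mul (by positivity) (by omega), padicValNat.prime_pow,
      padicValNat.eq_zero_of_not_dvd (by omega), add_zero]
  have hvaly : n * padicValNat 2 y = 2 * u + 2 := by
    rw [← padicValNat.pow y n]
    exact hval
  have hpvy : 1 ≤ padicValNat 2 y := by
    rcases Nat.eq_zero_or_pos (padicValNat 2 y) with h | h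
    · rw [h, mul_zero] at hvaly; omega
    · exact h
  have hn2 : n ≤ 2 * u + 2 := by
    calc n = n * 1 := (mul_one n).symm
      _ ≤ n * padicValNat 2 y := Nat.mul_le_mul_left n hpvy
      _ = 2 * u + 2 := hvaly
  omega
end

section
/- Let $x, y, n$ be positive integers satisfying $(x+1) + (x+2) + \cdots + (2x) = y^n$. If $x \equiv 1 \pmod{4}$, then $n \le v_2(3x+1) - 1$. -/
theorem stmt_2 (x y n : ℕ) (hx : 0 < x) (hy : 0 < y) (hn : 0 < n)
    (heq : T 1 x = y ^ n) (hx4 : x % 4 = 1) :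
    n ≤ padicValNat 2 (3 * x + 1) - 1 := by
  haveI : Fact (Nat.Prime 2) := ⟨Nat.prime_two⟩
  -- key identity: 2 * T 1 x = (3x+1) * x
  have hsplit : (∑ i ∈ Finset.Ico 0 (x + 1), i) + ∑ i ∈ Finset.Ico (x + 1) (2 * x + 1), i
      = ∑ i ∈ Finset.Ico 0 (2 * x + 1), i :=
    Finset.sum_Ico_consecutive _ (by omega) (by omega)
  have hT : T 1 x = ∑ i ∈ Finset.Ico (x + 1) (2 * x + 1), i := by
    unfold T
    rw [Finset.sum_congr rfl (fun i _ => pow_one i), ← Finset.Ico_add_one_right_eq_Icc]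
  have h1 : (∑ i ∈ Finset.Ico 0 (x + 1), i) * 2 = (x + 1) * x := by
    rw [← Finset.range_eq_Ico, Finset.sum_range_id_mul_two]
    simp
  have h2 : (∑ i ∈ Finset.Ico 0 (2 * x + 1), i) * 2 = (2 * x + 1) * (2 * x) := by
    rw [← Finset.range_eq_Ico, Finset.sum_range_id_mul_two]
    simp
  have key : T 1 x * 2 = (3 * x + 1) * x := by
    have := congrArg (· * 2) hsplit
    simp only [add_mul] at this
    rw [h1, h2] at this
    rw [hT]
    nlinarith [this]
  -- x is odd
  have hxodd : ¬ (2 ∣ x) := by omega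
  have hvx : padicValNat 2 x = 0 := padicValNat.eq_zero_of_not_dvd hxodd
  have hx1 : (3 * x + 1) ≠ 0 := by omega
  have hT0 : T 1 x ≠ 0 := by
    intro h
    rw [h] at key
    have hpos : 0 < (3 * x + 1) * x := by positivity
    simp at key
    omega
  have hval : padicValNat 2 (T 1 x) + 1 = padicValNat 2 (3 * x + 1) := by
    have := congrArg (padicValNat 2) key
    rw [padicValNat.mul hT0 (by norm_num), padicValNat.mul hx1 (by omega), hvx] at this
    simpa [padicValNat.self] using this
  -- 4 ∣ 3x+1
  have h4 : (4 : ℕ) ∣ 3 * x + 1 := by omega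
  have hv2 : 2 ≤ padicValNat 2 (3 * x + 1) := by
    have : (2:ℕ)^2 ∣ 3 * x + 1 := by norm_num; omega
    exact (padicValNat_dvd_iff_le hx1).mp (by norm_num; omega)
  -- y is even
  have hy0 : y ≠ 0 := hy.ne'
  have hvy : padicValNat 2 (T 1 x) = n * padicValNat 2 y := by
    rw [heq, padicValNat.pow _ _]
  have hyeven : 1 ≤ padicValNat 2 y := by
    by_contra h
    have : padicValNat 2 y = 0 := by omega
    rw [this, mul_zero] at hvy
    omega
  calc n = n * 1 := (mul_one n).symm
    _ ≤ n * padicValNat 2 y := Nat.mul_le_mul_left n hyeven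
    _ = padicValNat 2 (T 1 x) := hvy.symm
    _ ≤ padicValNat 2 (3 * x + 1) - 1 := by omega
end

section
/- Let $x, y, n$ be positive integers satisfying $(x+1)^2 + (x+2)^2 + \cdots + (2x)^2 = y^n$. If $x \equiv 1 \pmod{8}$ and $x \not\equiv 1 \pmod{32}$, then $n \le v_2(7x+1) - 1$. -/
lemma T2_formula (x : ℕ) : 6 * T 2 x = x * (2 * x + 1) * (7 * x + 1) := by
  induction x with
  | zero => decide
  | succ m ih =>
    rcases Nat.eq_zero_or_pos m with h | h
    · subst h; decide
    have h1 : T 2 (m + 1) + (m + 1) ^ 2 = T 2 m + (2 * m + 1) ^ 2 + (2 * m + 2) ^ 2 := by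
      unfold T
      have e1 : 2 * (m + 1) = (2 * m + 1) + 1 := by ring
      rw [e1, Finset.sum_Icc_succ_top (by omega : m + 1 + 1 ≤ 2 * m + 1 + 1),
        Finset.sum_Icc_succ_top (by omega : m + 1 + 1 ≤ 2 * m + 1)]
      have e2 : Finset.Icc (m + 1) (2 * m) = insert (m + 1) (Finset.Icc (m + 1 + 1) (2 * m)) := by
        ext i; simp [Finset.mem_insert]; omega
      rw [e2, Finset.sum_insert (by simp)]
      ring
    nlinarith [h1, ih]

theorem stmt_3 (x y n : ℕ) (hx : 0 < x) (hy : 0 < y) (hn : 0 < n)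
    (heq : T 2 x = y ^ n) (hx8 : x % 8 = 1) (hx32 : x % 32 ≠ 1) :
    n ≤ padicValNat 2 (7 * x + 1) - 1 := by
  haveI : Fact (Nat.Prime 2) := ⟨Nat.prime_two⟩
  have hf := T2_formula x
  have hT0 : T 2 x ≠ 0 := by
    rw [heq]; positivity
  have hxodd : ¬ 2 ∣ x := by omega
  have h2odd : ¬ 2 ∣ (2 * x + 1) := by omega
  have h8 : (2:ℕ) ^ 3 ∣ 7 * x + 1 := by omega
  have hN0 : 7 * x + 1 ≠ 0 := by omega
  have hv3 : 3 ≤ padicValNat 2 (7 * x + 1) :=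
    (padicValNat_dvd_iff_le hN0).mp h8
  have hL : padicValNat 2 (6 * T 2 x) = 1 + padicValNat 2 (T 2 x) := by
    have h6 : padicValNat 2 6 = 1 := by
      rw [show (6:ℕ) = 2 * 3 by norm_num, padicValNat.mul (by norm_num) (by norm_num),
        padicValNat.self (by norm_num), padicValNat.eq_zero_of_not_dvd (by norm_num)]
    rw [padicValNat.mul (by norm_num) hT0, h6]
  have hR : padicValNat 2 (x * (2 * x + 1) * (7 * x + 1)) = padicValNat 2 (7 * x + 1) := by
    rw [padicValNat.mul (by positivity) hN0, padicValNat.mul (by omega) (by omega),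
      padicValNat.eq_zero_of_not_dvd hxodd, padicValNat.eq_zero_of_not_dvd h2odd]
    omega
  have hvT : 1 + padicValNat 2 (T 2 x) = padicValNat 2 (7 * x + 1) := by
    rw [← hL, hf, hR]
  have hyv : padicValNat 2 (T 2 x) = n * padicValNat 2 y := by
    rw [heq, padicValNat.pow y n]
  have hy1 : 1 ≤ padicValNat 2 y := by nlinarith [hvT, hyv, hv3]
  calc n ≤ n * padicValNat 2 y := Nat.le_mul_of_pos_right n hy1
    _ ≤ padicValNat 2 (7 * x + 1) - 1 := by omega
end

section
/- Let $x, y, n$ be positive integers satisfying $(x+1)^3 + (x+2)^3 + \cdots + (2x)^3 = y^n$. If $x \equiv 1 \pmod{8}$ and $x \not\equiv 1 \pmod{32}$, then $n \le v_2((5x+3)(3x+1)) - 2$. -/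
lemma sum_cube (m : ℕ) : 4 * ∑ i ∈ Finset.range (m + 1), i ^ 3 = (m * (m + 1)) ^ 2 := by
  induction m with
  | zero => simp
  | succ m ih => rw [Finset.sum_range_succ, Nat.mul_add, ih]; ring

theorem stmt_4 (x y n : ℕ) (hx : 0 < x) (hy : 0 < y) (hn : 0 < n)
    (heq : T 3 x = y ^ n) (hx8 : x % 8 = 1) (hx32 : x % 32 ≠ 1) :
    n ≤ padicValNat 2 ((5 * x + 3) * (3 * x + 1)) - 2 := by
  haveI : Fact (Nat.Prime 2) := ⟨Nat.prime_two⟩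
  obtain ⟨k, hk⟩ : ∃ k, x = 8 * k + 1 := ⟨x / 8, by omega⟩
  -- sum identity
  have hsum : (∑ i ∈ Finset.range (x + 1), i ^ 3) + T 3 x
      = ∑ i ∈ Finset.range (2 * x + 1), i ^ 3 := by
    rw [T, ← Finset.Ico_add_one_right_eq_Icc, Finset.range_eq_Ico, Finset.range_eq_Ico]
    exact Finset.sum_Ico_consecutive _ (by omega) (by omega)
  have h4 : (x * (x + 1)) ^ 2 + 4 * T 3 x = (2 * x * (2 * x + 1)) ^ 2 := by
    rw [← sum_cube, ← sum_cube, ← hsum]; ring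
  have hpoly : (2 * x * (2 * x + 1)) ^ 2
      = (x * (x + 1)) ^ 2 + 4 * (8 * (x ^ 2 * ((6 * k + 1) * (5 * k + 1)))) := by
    subst hk; ring
  have hT : T 3 x = 8 * (x ^ 2 * ((6 * k + 1) * (5 * k + 1))) := by
    have h5 : 4 * T 3 x = 4 * (8 * (x ^ 2 * ((6 * k + 1) * (5 * k + 1)))) := by
      have := h4.trans hpoly
      exact Nat.add_left_cancel this
    exact Nat.eq_of_mul_eq_mul_left (by norm_num) h5
  -- valuation of T
  have hx2 : x ^ 2 ≠ 0 := by positivity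
  have h6k : (6 * k + 1) ≠ 0 := by omega
  have h5k : (5 * k + 1) ≠ 0 := by omega
  have hvx : padicValNat 2 (x ^ 2) = 0 :=
    padicValNat.eq_zero_of_not_dvd
      (fun h => by have := Nat.Prime.dvd_of_dvd_pow Nat.prime_two h; omega)
  have hv6 : padicValNat 2 (6 * k + 1) = 0 :=
    padicValNat.eq_zero_of_not_dvd (by omega)
  have hvT : padicValNat 2 (T 3 x) = 3 + padicValNat 2 (5 * k + 1) := by
    rw [hT, show (8 : ℕ) = 2 ^ 3 by norm_num,
      padicValNat.mul (by positivity) (by positivity),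
      padicValNat.mul hx2 (by positivity),
      padicValNat.mul h6k h5k, padicValNat.prime_pow, hvx, hv6]
    omega
  -- valuation of the RHS product
  have hprod : (5 * x + 3) * (3 * x + 1) = 2 ^ 5 * ((5 * k + 1) * (6 * k + 1)) := by
    subst hk; ring
  have hvP : padicValNat 2 ((5 * x + 3) * (3 * x + 1))
      = 5 + padicValNat 2 (5 * k + 1) := by
    rw [hprod, padicValNat.mul (by positivity) (by positivity),
      padicValNat.mul h5k h6k, padicValNat.prime_pow, hv6]
    omega
  -- y is even
  have h2y : 2 ∣ y := by
    have : (2 : ℕ) ∣ y ^ n := by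
      rw [← heq, hT]; exact ⟨4 * (x ^ 2 * ((6 * k + 1) * (5 * k + 1))), by ring⟩
    exact Nat.Prime.dvd_of_dvd_pow Nat.prime_two this
  have hvy : 1 ≤ padicValNat 2 y := one_le_padicValNat_of_dvd hy.ne' h2y
  have hvyn : padicValNat 2 (T 3 x) = n * padicValNat 2 y := by
    rw [heq, padicValNat.pow y n]
  have : n ≤ n * padicValNat 2 y := Nat.le_mul_of_pos_right n (by omega)
  omega
end

section
/- Let $x, k, y, n$ be positive integers satisfying $(x+1)^k + (x+2)^k + \cdots + (2x)^k = y^n$. If $x \equiv 5 \pmod{8}$ and $k \ge 3$ is odd, then $n \le v_2(3x+1)$. -/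
-- pair lemma
lemma pair_aux (k : ℕ) (hk : 2 ≤ k) (hkodd : Odd k) (M a : ℤ) (hM : (2:ℤ) ∣ M) :
    ∃ c : ℤ, a ^ k + (M - a) ^ k = M * c ∧ ((c : ZMod 2) = (a : ZMod 2)) := by
  refine ⟨∑ i ∈ Finset.range k, a ^ i * (a - M) ^ (k - 1 - i), ?_, ?_⟩
  · have h := geom_sum₂_mul a (a - M) k
    have h2 : (a - M)^k = -((M - a)^k) := by
      rw [show a - M = -(M - a) by ring, hkodd.neg_pow]
    rw [h2, show a - (a - M) = M by ring] at h
    linear_combination -h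
  · have hM0 : ((M : ZMod 2)) = 0 := by
      rcases hM with ⟨d, rfl⟩
      push_cast
      rw [show (2 : ZMod 2) = 0 by decide]
      ring
    push_cast
    rw [hM0, sub_zero]
    have hterm : ∀ i ∈ Finset.range k,
        ((a:ZMod 2))^i * ((a:ZMod 2))^(k-1-i) = ((a:ZMod 2))^(k-1) := by
      intro i hi
      rw [← pow_add]
      congr 1
      simp only [Finset.mem_range] at hi
      omega
    rw [Finset.sum_congr rfl hterm, Finset.sum_const, Finset.card_range]
    have hb : ∀ b : ZMod 2, b^(k-1) = b := by
      intro b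
      have : b = 0 ∨ b = 1 := by revert b; decide
      rcases this with rfl | rfl
      · rw [zero_pow]; omega
      · rw [one_pow]
    rw [hb, nsmul_eq_mul]
    have hk1 : ((k:ℕ) : ZMod 2) = 1 := by
      obtain ⟨j, rfl⟩ := hkodd
      push_cast
      rw [show (2 : ZMod 2) = 0 by decide]
      ring
    rw [hk1, one_mul]

theorem stmt_5 (x k y n : ℕ) (hx : 0 < x) (hy : 0 < y) (hn : 0 < n)
    (heq : T k x = y ^ n) (hx8 : x % 8 = 5) (hk3 : 3 ≤ k) (hkodd : Odd k) :
    n ≤ padicValNat 2 (3 * x + 1) := by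
  haveI : Fact (Nat.Prime 2) := ⟨Nat.prime_two⟩
  obtain ⟨t, rfl⟩ : ∃ t, x = 8*t+5 := ⟨x/8, by omega⟩
  obtain ⟨M, hMdef⟩ : ∃ M, M = 3*(8*t+5)+1 := ⟨_, rfl⟩
  obtain ⟨m, hmdef⟩ : ∃ m, m = 12*t+8 := ⟨_, rfl⟩
  rw [← hMdef]
  have hM2 : M = 2*m := by omega
  obtain ⟨v, hv⟩ : ∃ v, v = padicValNat 2 M := ⟨_, rfl⟩
  have hMne : M ≠ 0 := by omega
  have hv3 : 3 ≤ v := by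
    rw [hv, ← padicValNat_dvd_iff_le hMne]
    exact ⟨3*t+2, by omega⟩
  -- M = 2^v * u with u odd
  obtain ⟨u, hu⟩ : ∃ u, M = 2^v * u := hv ▸ pow_padicValNat_dvd
  have huodd : ¬ (2 ∣ u) := by
    rintro ⟨w, hw⟩
    refine pow_succ_padicValNat_not_dvd (p := 2) hMne ⟨w, ?_⟩
    rw [← hv, hu, hw, pow_succ]; ring
  -- split the sum
  have hsplit : T (k) (8*t+5) = (∑ i ∈ Finset.Ioc (8*t+5) (m-1), (i^k + (M - i)^k)) + m^k := by
    have hunion1 : Finset.Ioc (8*t+5) (2*(8*t+5)) =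
        Finset.Ioc (8*t+5) m ∪ Finset.Ioc m (2*(8*t+5)) :=
      (Finset.Ioc_union_Ioc_eq_Ioc (by omega) (by omega)).symm
    have hunion2 : Finset.Ioc (8*t+5) m =
        Finset.Ioc (8*t+5) (m-1) ∪ Finset.Ioc (m-1) m :=
      (Finset.Ioc_union_Ioc_eq_Ioc (by omega) (by omega)).symm
    have hsing : Finset.Ioc (m-1) m = {m} := by
      ext i; simp only [Finset.mem_Ioc, Finset.mem_singleton]; omega
    have hdisj1 : Disjoint (Finset.Ioc (8*t+5) m) (Finset.Ioc m (2*(8*t+5))) := by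
      rw [Finset.disjoint_left]
      intro a ha hb
      simp only [Finset.mem_Ioc] at ha hb
      omega
    have hdisj2 : Disjoint (Finset.Ioc (8*t+5) (m-1)) (Finset.Ioc (m-1) m) := by
      rw [Finset.disjoint_left]
      intro a ha hb
      simp only [Finset.mem_Ioc] at ha hb
      omega
    have hrefl : ∑ i ∈ Finset.Ioc m (2*(8*t+5)), i^k
        = ∑ i ∈ Finset.Ioc (8*t+5) (m-1), (M-i)^k := by
      refine Finset.sum_nbij' (fun i => M - i) (fun i => M - i) ?_ ?_ ?_ ?_ ?_
      · intro a ha; simp only [Finset.mem_Ioc] at *; omega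
      · intro a ha; simp only [Finset.mem_Ioc] at *; omega
      · intro a ha; simp only [Finset.mem_Ioc] at *; omega
      · intro a ha; simp only [Finset.mem_Ioc] at *; omega
      · intro a ha; simp only [Finset.mem_Ioc] at ha
        rw [show M - (M - a) = a by omega]
    rw [T, Finset.Icc_add_one_left_eq_Ioc, hunion1, Finset.sum_union hdisj1, hunion2,
      Finset.sum_union hdisj2, hsing, Finset.sum_singleton, hrefl,
      Finset.sum_add_distrib]
    ring
  -- the odd count S
  obtain ⟨S, hS⟩ : ∃ S, S = ∑ i ∈ Finset.Ioc (8*t+5) (m-1), i := ⟨_, rfl⟩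
  have hkey : (8*t+6)*(8*t+5) + 2*S = m*(m-1) := by
    have hg1 := Finset.sum_range_id_mul_two m
    have hg2 := Finset.sum_range_id_mul_two (8*t+6)
    have hIco : Finset.Ioc (8*t+5) (m-1) = Finset.Ico (8*t+6) m := by
      ext i; simp only [Finset.mem_Ioc, Finset.mem_Ico]; omega
    have hcons : (∑ i ∈ Finset.range (8*t+6), i) + (∑ i ∈ Finset.Ico (8*t+6) m, i)
        = ∑ i ∈ Finset.range m, i := by
      rw [Finset.range_eq_Ico, Finset.range_eq_Ico]
      exact Finset.sum_Ico_consecutive _ (by omega) (by omega)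
    rw [show 8*t+6-1 = 8*t+5 by omega] at hg2
    rw [hS, hIco]
    linarith [hg1, hg2, hcons]
  have hkey2 : (8*t+6)*(8*t+5) + 2*S = (12*t+8)*(12*t+7) := by
    have hm1 : m - 1 = 12*t+7 := by omega
    rw [hm1, hmdef] at hkey
    exact hkey
  have hSodd : S = 2*(20*(t*t)+23*t+6)+1 := by
    have hZ : ((8*t+6):ℤ)*(8*t+5) + 2*(S:ℤ) = ((12*t+8):ℤ)*(12*t+7) := by
      exact_mod_cast hkey2
    have h2 : (2:ℤ)*(S:ℤ) = 2*(2*(20*((t:ℤ)*t)+23*t+6)+1) := by linear_combination hZ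
    have h3 : (S:ℤ) = 2*(20*((t:ℤ)*t)+23*t+6)+1 := mul_left_cancel₀ (by norm_num) h2
    exact_mod_cast h3
  -- pairs over ℤ
  have hMdvd2 : (2:ℤ) ∣ (M:ℤ) := ⟨(m:ℤ), by exact_mod_cast hM2⟩
  have hpair : ∀ i : ℕ, ∃ c : ℤ, (i:ℤ)^k + ((M:ℤ) - i)^k = (M:ℤ) * c ∧
      ((c : ZMod 2) = ((i:ℤ) : ZMod 2)) :=
    fun i => pair_aux k (by omega) hkodd (M:ℤ) i hMdvd2
  choose c hc1 hc2 using hpair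
  obtain ⟨C, hC⟩ : ∃ C, C = ∑ i ∈ Finset.Ioc (8*t+5) (m-1), c i := ⟨_, rfl⟩
  have hcast : ((∑ i ∈ Finset.Ioc (8*t+5) (m-1), (i^k + (M - i)^k) : ℕ) : ℤ)
      = (M:ℤ) * C := by
    rw [Nat.cast_sum, hC, Finset.mul_sum]
    refine Finset.sum_congr rfl ?_
    intro i hi
    simp only [Finset.mem_Ioc] at hi
    have hMi : ((M - i : ℕ) : ℤ) = (M:ℤ) - (i:ℤ) :=
      Nat.cast_sub (by omega)
    rw [Nat.cast_add, Nat.cast_pow, Nat.cast_pow, hMi, hc1 i]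
  have hTZ : (T k (8*t+5) : ℤ) = (M:ℤ) * C + (m:ℤ)^k := by
    rw [hsplit, Nat.cast_add, Nat.cast_pow, hcast]
  -- C is odd
  have hCZ : ((C : ℤ) : ZMod 2) = 1 := by
    have h0 : ((C : ℤ) : ZMod 2) = ∑ i ∈ Finset.Ioc (8*t+5) (m-1), ((c i : ZMod 2)) := by
      rw [hC, Int.cast_sum]
    have h1 : ∑ i ∈ Finset.Ioc (8*t+5) (m-1), ((c i : ZMod 2))
        = ∑ i ∈ Finset.Ioc (8*t+5) (m-1), ((i:ℕ) : ZMod 2) :=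
      Finset.sum_congr rfl (fun i _ => by rw [hc2 i, Int.cast_natCast])
    have h2 : (∑ i ∈ Finset.Ioc (8*t+5) (m-1), ((i:ℕ) : ZMod 2)) = ((S:ℕ) : ZMod 2) := by
      rw [hS, Nat.cast_sum]
    rw [h0, h1, h2, hSodd]
    rw [Nat.cast_add, Nat.cast_mul, ZMod.natCast_self, zero_mul, zero_add, Nat.cast_one]
  -- divisibility of m^k
  obtain ⟨w, hw⟩ : ∃ w, v = w + 1 := ⟨v-1, by omega⟩
  have hm1 : (2:ℕ)^w ∣ m := by
    have h1 : 2*m = 2*(2^w*u) := by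
      rw [← hM2, hu, hw, pow_succ]
      ring
    exact ⟨u, Nat.eq_of_mul_eq_mul_left (by norm_num) h1⟩
  have hmk : (2:ℤ)^(v+1) ∣ (m:ℤ)^k := by
    have h1 : ((2:ℤ)^w)^k ∣ (m:ℤ)^k := pow_dvd_pow_of_dvd (by exact_mod_cast hm1) k
    rw [← pow_mul] at h1
    refine dvd_trans (pow_dvd_pow 2 ?_) h1
    have h2 : w*3 ≤ w*k := Nat.mul_le_mul_left w hk3
    omega
  have hMZ : ((M:ℕ):ℤ) = 2^v * u := by exact_mod_cast hu
  have hTdvd : (2:ℕ)^v ∣ T k (8*t+5) := by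
    have h1 : (2:ℤ)^v ∣ (T k (8*t+5) : ℤ) := by
      rw [hTZ, hMZ]
      exact dvd_add ⟨u*C, by ring⟩ (dvd_trans (pow_dvd_pow 2 (by omega)) hmk)
    exact_mod_cast h1
  have hTnot : ¬ (2:ℕ)^(v+1) ∣ T k (8*t+5) := by
    intro h
    have hZ : (2:ℤ)^(v+1) ∣ (T k (8*t+5) : ℤ) := by exact_mod_cast h
    rw [hTZ] at hZ
    have h2 : (2:ℤ)^(v+1) ∣ (M:ℤ)*C := by
      have := dvd_sub hZ hmk
      simpa using this
    rw [hMZ, pow_succ] at h2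
    have h3 : (2:ℤ) ∣ (u:ℤ)*C := by
      rcases h2 with ⟨d, hd⟩
      refine ⟨d, ?_⟩
      have h2v : (2:ℤ)^v ≠ 0 := by positivity
      apply mul_left_cancel₀ h2v
      linear_combination hd
    have h4 : (((u:ℤ)*C : ℤ) : ZMod 2) = 0 :=
      (ZMod.intCast_zmod_eq_zero_iff_dvd _ 2).mpr h3
    rw [Int.cast_mul, hCZ, mul_one] at h4
    have h5 : (2:ℕ) ∣ u := by
      have h6 : ((u:ℤ) : ZMod 2) = 0 := h4
      have h7 : (2:ℤ) ∣ (u:ℤ) := (ZMod.intCast_zmod_eq_zero_iff_dvd _ 2).mp h6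
      exact_mod_cast h7
    exact huodd h5
  -- valuation of T
  have hT0 : T k (8*t+5) ≠ 0 := by
    rw [heq]
    positivity
  have hvT : padicValNat 2 (T k (8*t+5)) = v := by
    have h1 : v ≤ padicValNat 2 (T k (8*t+5)) := (padicValNat_dvd_iff_le hT0).mp hTdvd
    have h2 : ¬ (v+1 ≤ padicValNat 2 (T k (8*t+5))) :=
      fun h => hTnot ((padicValNat_dvd_iff_le hT0).mpr h)
    omega
  rw [heq, padicValNat.pow y n] at hvT
  rw [← hv]
  have hy1 : 1 ≤ padicValNat 2 y := by
    rcases Nat.eq_zero_or_pos (padicValNat 2 y) with h0 | h1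
    · rw [h0, Nat.mul_zero] at hvT
      omega
    · exact h1
  calc n ≤ n * padicValNat 2 y := Nat.le_mul_of_pos_right n hy1
    _ = v := hvT
end

section
/- Let $x, k, y, n$ be positive integers satisfying $(x+1)^k + (x+2)^k + \cdots + (2x)^k = y^n$. Then: (a) if $x \equiv 5 \pmod{8}$ and $k \ge 2$ is even, then $n \le 1$; (b) if $x \equiv 9 \pmod{16}$ and $k \ge 4$ is even, then $n \le 2$; (c) if $x \equiv 9 \pmod{16}$ and $k \ge 5$ is odd, or if $x \equiv 17 \pmod{32}$ and $k \ge 4$ is even, then $n \le 3$; (d) if $x \equiv 17 \pmod{32}$ and $k \ge 5$ is odd, then $n \le 4$. -/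
open Finset

lemma T_Ioc (k x : ℕ) : T k x = ∑ i ∈ Ioc x (2 * x), i ^ k := by
  rw [T, Finset.Icc_add_one_left_eq_Ioc]

lemma pow_mod_cycle {M P i : ℕ} (hM : 1 < M) (h1 : i ^ P % M = 1) (k : ℕ) :
    i ^ k % M = i ^ (k % P) % M := by
  conv_lhs => rw [← Nat.div_add_mod k P, pow_add, pow_mul]
  rw [Nat.mul_mod, Nat.pow_mod, h1, one_pow, Nat.one_mod_eq_one.mpr (by omega), one_mul,
    Nat.mod_mod]

lemma pow_reduce {M P Q m : ℕ} (hM : M = 2 ^ m) (hm : 1 ≤ m) (hPQ : P ∣ Q) (hQm : m ≤ Q)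
    (hP : 0 < P) (hodd : ∀ j, j < M → j % 2 = 1 → j ^ P % M = 1)
    {k : ℕ} (hkm : m ≤ k) (i : ℕ) :
    i ^ k % M = i ^ (k % P + Q) % M := by
  have hM1 : 1 < M := by rw [hM]; exact Nat.one_lt_two_pow (by omega)
  rcases Nat.even_or_odd i with he | ho
  · obtain ⟨t, rfl⟩ := he
    have hdvd : ∀ e : ℕ, m ≤ e → (t + t) ^ e % M = 0 := by
      intro e hme
      refine Nat.mod_eq_zero_of_dvd ?_
      rw [hM, show t + t = 2 * t by ring, mul_pow]
      exact dvd_mul_of_dvd_left (pow_dvd_pow 2 hme) _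
    rw [hdvd k hkm, hdvd (k % P + Q) (by omega)]
  · have h1 : i ^ P % M = 1 := by
      rw [Nat.pow_mod]
      apply hodd
      · exact Nat.mod_lt _ (by omega)
      · rw [Nat.mod_mod_of_dvd i (by rw [hM]; exact dvd_pow_self 2 (by omega))]
        exact Nat.odd_iff.mp ho
    rw [pow_mod_cycle hM1 h1 k, pow_mod_cycle hM1 h1 (k % P + Q)]
    congr 2
    obtain ⟨c, rfl⟩ := hPQ
    rw [Nat.add_mul_mod_self_left, Nat.mod_mod_of_dvd _ dvd_rfl]

lemma T_reduce {M P Q m : ℕ} (hM : M = 2 ^ m) (hm : 1 ≤ m) (hPQ : P ∣ Q) (hQm : m ≤ Q)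
    (hP : 0 < P) (hodd : ∀ j, j < M → j % 2 = 1 → j ^ P % M = 1)
    {k : ℕ} (hkm : m ≤ k) (x : ℕ) :
    T k x % M = T (k % P + Q) x % M := by
  rw [T_Ioc, T_Ioc, Finset.sum_nat_mod, Finset.sum_nat_mod _ _ (fun i => i ^ (k % P + Q))]
  congr 1
  exact Finset.sum_congr rfl fun i _ => pow_reduce hM hm hPQ hQm hP hodd hkm i

lemma window_shift {M L : ℕ} (e : ℕ) (hML : M ∣ L) (hM : 0 < M) (a : ℕ) :
    (∑ i ∈ Ioc a (a + L), i ^ e) % M = (∑ i ∈ Ioc 0 L, i ^ e) % M := by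
  induction a with
  | zero => simp
  | succ a ih =>
    have key : (∑ i ∈ Ioc a (a + L), i ^ e) + (a + L + 1) ^ e
        = (a + 1) ^ e + ∑ i ∈ Ioc (a + 1) (a + 1 + L), i ^ e := by
      rw [show a + 1 + L = (a + L) + 1 by ring, ← Finset.sum_Ioc_succ_top (by omega)]
      rw [show (∑ i ∈ Ioc a (a + L + 1), i ^ e)
          = (∑ i ∈ Ioc a (a + 1), i ^ e) + ∑ i ∈ Ioc (a + 1) (a + L + 1), i ^ e from
        (Finset.sum_Ioc_consecutive _ (by omega) (by omega)).symm]
      congr 1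
      rw [show Ioc a (a + 1) = {a + 1} by rw [← Finset.Icc_add_one_left_eq_Ioc]; simp]
      simp
    have hpow : (a + L + 1) ^ e % M = (a + 1) ^ e % M := by
      obtain ⟨c, rfl⟩ := hML
      rw [Nat.pow_mod, show a + M * c + 1 = (a + 1) + M * c by ring,
        Nat.add_mul_mod_self_left, ← Nat.pow_mod]
    have : (∑ i ∈ Ioc (a + 1) (a + 1 + L), i ^ e) % M
        = (∑ i ∈ Ioc a (a + L), i ^ e) % M := by
      have h1 : ((∑ i ∈ Ioc (a + 1) (a + 1 + L), i ^ e) + (a + 1) ^ e) % M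
          = ((∑ i ∈ Ioc a (a + L), i ^ e) + (a + 1) ^ e) % M := by
        rw [show (∑ i ∈ Ioc (a + 1) (a + 1 + L), i ^ e) + (a + 1) ^ e
            = (a + 1) ^ e + ∑ i ∈ Ioc (a + 1) (a + 1 + L), i ^ e by ring, ← key,
          Nat.add_mod, hpow, ← Nat.add_mod]
      exact Nat.ModEq.add_right_cancel' _ h1
    rw [this, ih]

lemma T_mod_step {M L : ℕ} (e : ℕ) (hML : M ∣ L) (hM : 0 < M)
    (hW : (∑ i ∈ Ioc 0 L, i ^ e) % M = 0) (x : ℕ) :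
    T e (x + L) % M = T e x % M := by
  have key : T e (x + L) + (∑ i ∈ Ioc x (x + L), i ^ e)
      = T e x + ((∑ i ∈ Ioc (2 * x) (2 * x + L), i ^ e)
        + ∑ i ∈ Ioc (2 * x + L) (2 * x + L + L), i ^ e) := by
    rw [T_Ioc, T_Ioc, show 2 * (x + L) = 2 * x + L + L by ring]
    rw [Finset.sum_Ioc_consecutive _ (by omega) (by omega),
      Finset.sum_Ioc_consecutive _ (by omega) (by omega)]
    rw [show (∑ i ∈ Ioc x (2 * x + L + L), i ^ e)
        = (∑ i ∈ Ioc x (x + L), i ^ e) + ∑ i ∈ Ioc (x + L) (2 * x + L + L), i ^ e from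
      (Finset.sum_Ioc_consecutive _ (by omega) (by omega)).symm]
    ring
  have hz : ∀ a : ℕ, (∑ i ∈ Ioc a (a + L), i ^ e) % M = 0 := fun a => by
    rw [window_shift e hML hM a, hW]
  have addz : ∀ A B : ℕ, B % M = 0 → (A + B) % M = A % M := by
    intro A B hB
    obtain ⟨c, rfl⟩ : M ∣ B := Nat.dvd_of_mod_eq_zero hB
    exact Nat.add_mul_mod_self_left A M c
  calc T e (x + L) % M
      = (T e (x + L) + ∑ i ∈ Ioc x (x + L), i ^ e) % M := (addz _ _ (hz x)).symm
    _ = (T e x + ((∑ i ∈ Ioc (2 * x) (2 * x + L), i ^ e)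
        + ∑ i ∈ Ioc (2 * x + L) (2 * x + L + L), i ^ e)) % M := by rw [key]
    _ = T e x % M := by
        rw [addz _ _ ?_]
        rw [Nat.add_mod, hz (2 * x), hz (2 * x + L)]
        simp

lemma T_mod_add_mul {M L : ℕ} (e : ℕ) (hML : M ∣ L) (hM : 0 < M)
    (hW : (∑ i ∈ Ioc 0 L, i ^ e) % M = 0) (r q : ℕ) :
    T e (r + L * q) % M = T e r % M := by
  induction q with
  | zero => simp
  | succ q ih =>
    rw [show r + L * (q + 1) = (r + L * q) + L by ring, T_mod_step e hML hM hW, ih]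

lemma T_mod_period {M L : ℕ} (e : ℕ) (hML : M ∣ L) (hM : 0 < M)
    (hW : (∑ i ∈ Ioc 0 L, i ^ e) % M = 0) (x : ℕ) :
    T e x % M = T e (x % L) % M := by
  have h := T_mod_add_mul e hML hM hW (x % L) (x / L)
  rwa [show x % L + L * (x / L) = x from Nat.mod_add_div x L] at h

lemma caseA {x k : ℕ} (hx : x % 8 = 5) (hk : 2 ≤ k) (he : Even k) : T k x % 4 = 2 := by
  have h0 : k % 2 = 0 := Nat.even_iff.mp he
  have h1 : T k x % 4 = T (k % 2 + 2) x % 4 :=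
    T_reduce (M := 4) (P := 2) (Q := 2) (m := 2) (by norm_num) (by norm_num) dvd_rfl
      (by norm_num) (by norm_num) (by decide) hk x
  rw [h1, h0]
  have h2 : T 2 x % 4 = T 2 (x % 8) % 4 :=
    T_mod_period (L := 8) 2 (by norm_num) (by norm_num) (by decide) x
  rw [h2, hx]
  decide

lemma caseB {x k : ℕ} (hx : x % 16 = 9) (hk : 4 ≤ k) (he : Even k) : T k x % 8 = 4 := by
  have h0 : k % 2 = 0 := Nat.even_iff.mp he
  have h1 : T k x % 8 = T (k % 2 + 4) x % 8 :=
    T_reduce (M := 8) (P := 2) (Q := 4) (m := 3) (by norm_num) (by norm_num) ⟨2, rfl⟩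
      (by norm_num) (by norm_num) (by decide) (by omega) x
  rw [h1, h0]
  have h2 : T 4 x % 8 = T 4 (x % 16) % 8 :=
    T_mod_period (L := 16) 4 ⟨2, rfl⟩ (by norm_num) (by decide) x
  rw [h2, hx]
  decide

lemma caseC1 {x k : ℕ} (hx : x % 16 = 9) (hk : 5 ≤ k) (he : Odd k) : T k x % 16 = 8 := by
  have h0 : k % 2 = 1 := Nat.odd_iff.mp he
  have h1 : T k x % 16 = T (k % 4 + 4) x % 16 :=
    T_reduce (M := 16) (P := 4) (Q := 4) (m := 4) (by norm_num) (by norm_num) dvd_rfl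
      (by norm_num) (by norm_num) (by decide) (by omega) x
  have h2 : ∀ e, (∑ i ∈ Ioc 0 16, i ^ e) % 16 = 0 → T (e) x % 16 = T e 9 % 16 := by
    intro e hW
    rw [T_mod_period (L := 16) e dvd_rfl (by norm_num) hW x, hx]
  have h4 : k % 4 = 1 ∨ k % 4 = 3 := by omega
  rcases h4 with h4 | h4 <;> rw [h1, h4]
  · rw [h2 5 (by decide)]; decide
  · rw [h2 7 (by decide)]; decide

lemma caseC2 {x k : ℕ} (hx : x % 32 = 17) (hk : 4 ≤ k) (he : Even k) : T k x % 16 = 8 := by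
  have h0 : k % 2 = 0 := Nat.even_iff.mp he
  have h1 : T k x % 16 = T (k % 4 + 4) x % 16 :=
    T_reduce (M := 16) (P := 4) (Q := 4) (m := 4) (by norm_num) (by norm_num) dvd_rfl
      (by norm_num) (by norm_num) (by decide) (by omega) x
  have h2 : ∀ e, (∑ i ∈ Ioc 0 32, i ^ e) % 16 = 0 → T (e) x % 16 = T e 17 % 16 := by
    intro e hW
    rw [T_mod_period (L := 32) e ⟨2, rfl⟩ (by norm_num) hW x, hx]
  have h4 : k % 4 = 0 ∨ k % 4 = 2 := by omega
  rcases h4 with h4 | h4 <;> rw [h1, h4]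
  · rw [h2 4 (by decide)]; decide
  · rw [h2 6 (by decide)]; decide

lemma caseD {x k : ℕ} (hx : x % 32 = 17) (hk : 5 ≤ k) (he : Odd k) : T k x % 32 = 16 := by
  have h0 : k % 2 = 1 := Nat.odd_iff.mp he
  have h1 : T k x % 32 = T (k % 8 + 8) x % 32 :=
    T_reduce (M := 32) (P := 8) (Q := 8) (m := 5) (by norm_num) (by norm_num) dvd_rfl
      (by norm_num) (by norm_num) (by decide) (by omega) x
  have h2 : ∀ e, (∑ i ∈ Ioc 0 32, i ^ e) % 32 = 0 → T (e) x % 32 = T e 17 % 32 := by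
    intro e hW
    rw [T_mod_period (L := 32) e dvd_rfl (by norm_num) hW x, hx]
  have h4 : k % 8 = 1 ∨ k % 8 = 3 ∨ k % 8 = 5 ∨ k % 8 = 7 := by omega
  rcases h4 with h4 | h4 | h4 | h4 <;> rw [h1, h4]
  · rw [h2 9 (by decide)]; decide
  · rw [h2 11 (by decide)]; decide
  · rw [h2 13 (by decide)]; decide
  · rw [h2 15 (by decide)]; decide

lemma nbound {t n y A : ℕ} (ht : 1 ≤ t) (hn : 0 < n) (heq : A = y ^ n)
    (hT : A % 2 ^ (t + 1) = 2 ^ t) : n ≤ t := by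
  by_contra h
  push_neg at h
  have h2A : 2 ∣ A := by
    have h1 : A % 2 ^ t = 0 := by
      rw [← Nat.mod_mod_of_dvd A (pow_dvd_pow 2 (Nat.le_succ t)), hT, Nat.mod_self]
    exact dvd_trans (dvd_pow_self 2 (by omega)) (Nat.dvd_of_mod_eq_zero h1)
  have h2y : 2 ∣ y := Nat.Prime.dvd_of_dvd_pow Nat.prime_two (heq ▸ h2A)
  have hdvd : 2 ^ (t + 1) ∣ A := by
    calc (2:ℕ) ^ (t + 1) ∣ 2 ^ n := pow_dvd_pow 2 h
    _ ∣ y ^ n := pow_dvd_pow_of_dvd h2y n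
    _ = A := heq.symm
  have hz := Nat.mod_eq_zero_of_dvd hdvd
  rw [hT] at hz
  exact absurd hz (pow_ne_zero t two_ne_zero)

theorem stmt_6 (x k y n : ℕ) (hx : 0 < x) (hk : 0 < k) (hy : 0 < y) (hn : 0 < n)
    (heq : T k x = y ^ n) :
    (x % 8 = 5 → 2 ≤ k → Even k → n ≤ 1) ∧
    (x % 16 = 9 → 4 ≤ k → Even k → n ≤ 2) ∧
    ((x % 16 = 9 ∧ 5 ≤ k ∧ Odd k) ∨ (x % 32 = 17 ∧ 4 ≤ k ∧ Even k) → n ≤ 3) ∧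
    (x % 32 = 17 → 5 ≤ k → Odd k → n ≤ 4) := by
  refine ⟨fun h1 h2 h3 => ?_, fun h1 h2 h3 => ?_, fun h => ?_, fun h1 h2 h3 => ?_⟩
  · refine nbound (t := 1) (by norm_num) hn heq ?_
    have h4 : (2:ℕ) ^ (1 + 1) = 4 := by norm_num
    have h5 : (2:ℕ) ^ 1 = 2 := by norm_num
    rw [h4, h5]
    exact caseA h1 h2 h3
  · refine nbound (t := 2) (by norm_num) hn heq ?_
    have h4 : (2:ℕ) ^ (2 + 1) = 8 := by norm_num
    have h5 : (2:ℕ) ^ 2 = 4 := by norm_num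
    rw [h4, h5]
    exact caseB h1 h2 h3
  · refine nbound (t := 3) (by norm_num) hn heq ?_
    have h4 : (2:ℕ) ^ (3 + 1) = 16 := by norm_num
    have h5 : (2:ℕ) ^ 3 = 8 := by norm_num
    rw [h4, h5]
    rcases h with ⟨h1, h2, h3⟩ | ⟨h1, h2, h3⟩
    · exact caseC1 h1 h2 h3
    · exact caseC2 h1 h2 h3
  · refine nbound (t := 4) (by norm_num) hn heq ?_
    have h4 : (2:ℕ) ^ (4 + 1) = 32 := by norm_num
    have h5 : (2:ℕ) ^ 4 = 16 := by norm_num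
    rw [h4, h5]
    exact caseD h1 h2 h3
end

section
/- Let $x, k, y, n$ be positive integers satisfying $(x+1)^k + (x+2)^k + \cdots + (2x)^k = y^n$. If $x \equiv 4 \pmod{9}$ and $k \ge 2$ is even, then $n \le v_3(2x+1) - 1$. -/
open Finset

/-- partial power sum over `range N`, as an integer. -/
def Fs (k N : ℕ) : ℤ := ∑ i ∈ Finset.range N, (i : ℤ) ^ k

lemma Fs_add (k m n : ℕ) :
    Fs k (m + n) = Fs k m + ∑ i ∈ range n, ((i : ℤ) + (m : ℤ)) ^ k := by
  unfold Fs
  rw [Finset.sum_range_add]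
  congr 1
  refine Finset.sum_congr rfl fun i _ => ?_
  push_cast
  ring

lemma bin_aux (a c : ℤ) : ∀ K : ℕ, c ^ 2 ∣ (a + c) ^ (K + 1) - a ^ (K + 1) - (K + 1) * c * a ^ K := by
  intro K
  induction K with
  | zero => exact ⟨0, by push_cast; ring⟩
  | succ K ih =>
    obtain ⟨d, hd⟩ := ih
    refine ⟨(K + 1) * a ^ K + d * (a + c), ?_⟩
    push_cast
    push_cast at hd
    linear_combination (a + c) * hd

lemma shift_block (K N : ℕ) (c : ℤ) :
    ∃ d : ℤ, (∑ i ∈ range N, ((i : ℤ) + c) ^ (K + 1))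
      = Fs (K + 1) N + (K + 1) * c * (∑ i ∈ range N, (i : ℤ) ^ K) + c ^ 2 * d := by
  have h : c ^ 2 ∣ ∑ i ∈ range N,
      (((i : ℤ) + c) ^ (K + 1) - (i : ℤ) ^ (K + 1) - (K + 1) * c * (i : ℤ) ^ K) :=
    Finset.dvd_sum fun i _ => bin_aux i c K
  obtain ⟨d, hd⟩ := h
  refine ⟨d, ?_⟩
  rw [Finset.sum_sub_distrib, Finset.sum_sub_distrib, ← Finset.mul_sum] at hd
  unfold Fs
  linarith [hd]

lemma shift_mod (k : ℕ) (M c : ℤ) (hc : M ∣ c) (N : ℕ) :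
    M ∣ (∑ i ∈ range N, ((i : ℤ) + c) ^ k) - ∑ i ∈ range N, (i : ℤ) ^ k := by
  rw [← Finset.sum_sub_distrib]
  refine Finset.dvd_sum fun i _ => ?_
  have h := sub_dvd_pow_sub_pow ((i : ℤ) + c) (i : ℤ) k
  have h2 : ((i : ℤ) + c) - i = c := by ring
  rw [h2] at h
  exact hc.trans h

lemma reflect_sum (k : ℕ) (hke : Even k) (M : ℤ) (a : ℕ) (hM : M ∣ 2 * (a : ℤ) + 1) :
    M ∣ (∑ j ∈ range a, ((a : ℤ) + 1 + j) ^ k) - ∑ j ∈ range a, ((j : ℤ) + 1) ^ k := by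
  rw [← Finset.sum_range_reflect (fun j => ((a : ℤ) + 1 + j) ^ k) a]
  rw [← Finset.sum_sub_distrib]
  refine Finset.dvd_sum fun j hj => ?_
  have hj' : j < a := Finset.mem_range.mp hj
  have hcast : ((a - 1 - j : ℕ) : ℤ) = (a : ℤ) - 1 - j := by omega
  simp only [hcast]
  have h1 : ((a : ℤ) + 1 + ((a : ℤ) - 1 - j)) = 2 * a - j := by ring
  rw [h1]
  have h2 : ((j : ℤ) + 1) ^ k = (-((j : ℤ) + 1)) ^ k := (hke.neg_pow _).symm
  rw [h2]
  have h := sub_dvd_pow_sub_pow (2 * (a : ℤ) - j) (-((j : ℤ) + 1)) k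
  have h3 : (2 * (a : ℤ) - j) - (-((j : ℤ) + 1)) = 2 * a + 1 := by ring
  rw [h3] at h
  exact hM.trans h

lemma mult_blocks (k v : ℕ) : ∀ s : ℕ, (3 : ℤ) ^ v ∣ Fs k (3 ^ v * s) - s * Fs k (3 ^ v) := by
  intro s
  induction s with
  | zero => simp [Fs]
  | succ s ih =>
    have h1 : 3 ^ v * (s + 1) = 3 ^ v * s + 3 ^ v := by ring
    rw [h1, Fs_add]
    have h2 : (3 : ℤ) ^ v ∣ ((3 ^ v * s : ℕ) : ℤ) := by
      push_cast
      exact Dvd.intro _ rfl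
    have h3 := shift_mod k ((3 : ℤ) ^ v) ((3 ^ v * s : ℕ) : ℤ) h2 (3 ^ v)
    have h4 := dvd_add ih h3
    have h5 : (Fs k (3 ^ v * s) - s * Fs k (3 ^ v)) +
        ((∑ i ∈ range (3 ^ v), ((i : ℤ) + ((3 ^ v * s : ℕ) : ℤ)) ^ k) - ∑ i ∈ range (3 ^ v), (i : ℤ) ^ k)
        = Fs k (3 ^ v * s) + (∑ i ∈ range (3 ^ v), ((i : ℤ) + ((3 ^ v * s : ℕ) : ℤ)) ^ k)
          - ((s : ℤ) + 1) * Fs k (3 ^ v) := by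
      unfold Fs
      push_cast
      ring
    rw [h5] at h4
    have hc : (((s+1:ℕ)) : ℤ) = (s : ℤ) + 1 := by push_cast; ring
    rw [hc]
    exact h4

lemma F_dvd (k : ℕ) (hke : Even k) (hk1 : 1 ≤ k) :
    ∀ e : ℕ, (3 : ℤ) ^ (e + 1) ∣ Fs k (3 ^ (e + 1)) + 3 ^ e := by
  obtain ⟨K, rfl⟩ : ∃ K, k = K + 1 := ⟨k - 1, by omega⟩
  intro e
  induction e with
  | zero =>
    have hFs : Fs (K + 1) (3 ^ (0 + 1)) = 1 + 2 ^ (K + 1) := by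
      norm_num [Fs, Finset.sum_range_succ]
    rw [hFs]
    obtain ⟨mm, hm⟩ := hke
    have h4 : (3 : ℤ) ∣ 4 ^ mm - 1 := by
      simpa using sub_dvd_pow_sub_pow (4 : ℤ) 1 mm
    have h2 : (2 : ℤ) ^ (K + 1) = 4 ^ mm := by
      rw [hm, ← two_mul, pow_mul]
      norm_num
    rw [h2]
    obtain ⟨w, hw⟩ := h4
    exact ⟨w + 1, by norm_num; linarith⟩
  | succ e ih =>
    set B : ℕ := 3 ^ (e + 1) with hB
    have hsplit : (3 : ℕ) ^ (e + 1 + 1) = B + B + B := by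
      simp only [hB]
      ring
    rw [hsplit, Fs_add, Fs_add]
    -- third chunk: shift inside
    have hsum3 : (∑ i ∈ range B, ((i : ℤ) + ((B + B : ℕ) : ℤ)) ^ (K + 1))
        = ∑ i ∈ range B, ((i : ℤ) + 2 * ((B : ℕ) : ℤ)) ^ (K + 1) := by
      refine Finset.sum_congr rfl fun i _ => ?_
      push_cast
      ring
    rw [hsum3]
    obtain ⟨d1, hd1⟩ := shift_block K B ((B : ℕ) : ℤ)
    obtain ⟨d2, hd2⟩ := shift_block K B (2 * ((B : ℕ) : ℤ))
    obtain ⟨u, hu⟩ := ih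
    refine ⟨u + (K + 1) * (∑ i ∈ range B, (i : ℤ) ^ K) + 3 ^ e * (d1 + 4 * d2), ?_⟩
    rw [hd1, hd2]
    have hBcast : ((B : ℕ) : ℤ) = 3 ^ (e + 1) := by push_cast [hB]; ring
    rw [hBcast]
    push_cast
    push_cast at hu
    linear_combination 3 * hu

theorem stmt_8 (x k y n : ℕ) (hx : 0 < x) (hy : 0 < y) (hn : 0 < n)
    (heq : T k x = y ^ n) (hx9 : x % 9 = 4) (hk2 : 2 ≤ k) (hkeven : Even k) :
    n ≤ padicValNat 3 (2 * x + 1) - 1 := by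
  have hp3 : Nat.Prime 3 := by norm_num
  haveI : Fact (Nat.Prime 3) := ⟨hp3⟩
  obtain ⟨m, hm_def⟩ : ∃ m', 2 * x + 1 = m' := ⟨_, rfl⟩
  rw [hm_def]
  obtain ⟨v, hv_def⟩ : ∃ v', padicValNat 3 m = v' := ⟨_, rfl⟩
  rw [hv_def]
  have hm0 : m ≠ 0 := by omega
  -- v ≥ 2
  have h9 : 3 ^ 2 ∣ m := by
    rw [show (3:ℕ) ^ 2 = 9 by norm_num]
    exact Nat.dvd_of_mod_eq_zero (by omega)
  have hv2 : 2 ≤ v := by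
    have := (padicValNat_dvd_iff_le hm0).mp h9
    omega
  -- decompose m = 3^v * t, 3 ∤ t
  have h3vdvd : 3 ^ v ∣ m := by
    rw [← hv_def]
    exact pow_padicValNat_dvd
  obtain ⟨t, ht⟩ := h3vdvd
  have h3nt : ¬ 3 ∣ t := by
    rintro ⟨u, hu⟩
    have hdd : 3 ^ (v + 1) ∣ m := ⟨u, by rw [ht, hu]; ring⟩
    have := (padicValNat_dvd_iff_le hm0).mp hdd
    omega
  -- t is odd
  obtain ⟨s, hs⟩ : ∃ s, t = 2 * s + 1 := by
    rcases Nat.even_or_odd t with he | ho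
    · exfalso
      have hEm : Even m := by
        rw [ht]
        exact he.mul_left _
      obtain ⟨q, hq⟩ := hEm
      omega
    · obtain ⟨q, hq⟩ := ho
      exact ⟨q, by omega⟩
  -- 3^v is odd
  obtain ⟨r, hr⟩ : ∃ r, 3 ^ v = 2 * r + 1 := by
    have : Odd ((3:ℕ) ^ v) := Odd.pow ⟨1, by norm_num⟩
    obtain ⟨q, hq⟩ := this
    exact ⟨q, by omega⟩
  -- x = 3^v * s + r
  have hx_eq : x = 3 ^ v * s + r := by
    have h1 : ((3:ℤ) ^ v * s + r) = x := by
      have hm' : ((m:ℕ) : ℤ) = 2 * (x:ℤ) + 1 := by exact_mod_cast hm_def.symm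
      have ht'' : ((m:ℕ) : ℤ) = (3:ℤ) ^ v * (t:ℤ) := by exact_mod_cast ht
      have ht' : ((3:ℤ) ^ v) * t = 2 * x + 1 := ht''.symm.trans hm'
      have hs' : (t : ℤ) = 2 * s + 1 := by exact_mod_cast hs
      have hr' : ((3:ℤ) ^ v) = 2 * r + 1 := by exact_mod_cast hr
      have h2 : (2:ℤ) * (3 ^ v * s) + 2 * r = 2 * x := by
        linear_combination ht' - (3:ℤ) ^ v * hs' - hr'
      linarith
    exact_mod_cast h1.symm
  -- cast T
  have hT : ((T k x : ℤ)) = ∑ j ∈ range x, ((x : ℤ) + 1 + j) ^ k := by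
    have h1 : T k x = ∑ j ∈ range x, (x + 1 + j) ^ k := by
      unfold T
      rw [← Finset.Ico_add_one_right_eq_Icc, Finset.sum_Ico_eq_sum_range]
      have h2 : 2 * x + 1 - (x + 1) = x := by omega
      rw [h2]
    rw [h1]
    push_cast
    ring_nf
  -- Step 1
  have hMm : (3:ℤ) ^ v ∣ 2 * (x : ℤ) + 1 := by
    have h1 : ((3 ^ v : ℕ) : ℤ) ∣ ((m : ℕ) : ℤ) := Int.natCast_dvd_natCast.mpr ⟨t, ht⟩
    push_cast at h1
    have h2 : ((m : ℕ) : ℤ) = 2 * (x : ℤ) + 1 := by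
      push_cast
      omega
    rwa [h2] at h1
  have step1 : (3:ℤ) ^ v ∣ (T k x : ℤ) - ∑ j ∈ range x, ((j : ℤ) + 1) ^ k := by
    rw [hT]
    exact reflect_sum k hkeven _ x hMm
  -- S1 = Fs k (x+1)
  have hS1 : (∑ j ∈ range x, ((j : ℤ) + 1) ^ k) = Fs k (x + 1) := by
    unfold Fs
    rw [Finset.sum_range_succ']
    simp only [Nat.cast_zero]
    rw [zero_pow (by omega : k ≠ 0), add_zero]
    refine Finset.sum_congr rfl fun j _ => ?_
    push_cast
    ring
  rw [hS1] at step1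
  -- Step 3
  have hx1 : x + 1 = 3 ^ v * s + (r + 1) := by omega
  have step3 : (3:ℤ) ^ v ∣ Fs k (x + 1) - ((s : ℤ) * Fs k (3 ^ v) + Fs k (r + 1)) := by
    rw [hx1, Fs_add]
    have h3a := mult_blocks k v s
    have h3b : (3:ℤ) ^ v ∣ (∑ i ∈ range (r + 1), ((i : ℤ) + ((3 ^ v * s : ℕ) : ℤ)) ^ k)
        - Fs k (r + 1) := by
      have hc : (3:ℤ) ^ v ∣ ((3 ^ v * s : ℕ) : ℤ) := by
        push_cast
        exact Dvd.intro _ rfl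
      exact shift_mod k _ _ hc (r + 1)
    have h4 : (3:ℤ) ^ v ∣ _ := dvd_add h3a h3b
    convert h4 using 1
    unfold Fs
    ring
  -- Step 4
  have hsplitF : (3 : ℕ) ^ v = (r + 1) + r := by omega
  have step4 : (3:ℤ) ^ v ∣ Fs k (3 ^ v) - 2 * Fs k (r + 1) := by
    nth_rewrite 1 [hsplitF]
    rw [Fs_add]
    have hrefl : (3:ℤ) ^ v ∣ (∑ j ∈ range r, ((r : ℤ) + 1 + j) ^ k)
        - ∑ j ∈ range r, ((j : ℤ) + 1) ^ k := by
      refine reflect_sum k hkeven _ r ?_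
      have h5 : ((3:ℤ) ^ v) = 2 * r + 1 := by exact_mod_cast hr
      rw [h5]
    have hP : (∑ j ∈ range r, ((j : ℤ) + 1) ^ k) = Fs k (r + 1) := by
      unfold Fs
      rw [Finset.sum_range_succ']
      simp only [Nat.cast_zero]
      rw [zero_pow (by omega : k ≠ 0), add_zero]
      refine Finset.sum_congr rfl fun j _ => ?_
      push_cast
      ring
    have hform : (∑ i ∈ range r, ((i : ℤ) + ((r + 1 : ℕ) : ℤ)) ^ k)
        = ∑ j ∈ range r, ((r : ℤ) + 1 + j) ^ k := by
      refine Finset.sum_congr rfl fun j _ => ?_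
      push_cast
      ring
    rw [hform]
    rw [hP] at hrefl
    convert hrefl using 1
    ring
  -- Step 5
  have step5 : (3:ℤ) ^ v ∣ Fs k (3 ^ v) + 3 ^ (v - 1) := by
    obtain ⟨e, he⟩ : ∃ e, v = e + 1 := ⟨v - 1, by omega⟩
    have h6 := F_dvd k hkeven (by omega) e
    rw [he]
    simpa using h6
  -- Combine: 3^v ∣ 2*T + t*3^(v-1)
  have hcomb : (3:ℤ) ^ v ∣ 2 * (T k x : ℤ) + (t : ℤ) * 3 ^ (v - 1) := by
    have h1 : (3:ℤ) ^ v ∣ 2 * ((T k x : ℤ) - Fs k (x + 1)) := step1.mul_left 2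
    have h2 : (3:ℤ) ^ v ∣ 2 * (Fs k (x + 1) - ((s : ℤ) * Fs k (3 ^ v) + Fs k (r + 1))) :=
      step3.mul_left 2
    have h3 : (3:ℤ) ^ v ∣ (2 * (s : ℤ) + 1) * (Fs k (3 ^ v) + 3 ^ (v - 1)) :=
      step5.mul_left _
    have h5 : (3:ℤ) ^ v ∣ _ := dvd_add (dvd_add h1 h2) (dvd_sub h3 step4)
    have ht' : (t : ℤ) = 2 * s + 1 := by exact_mod_cast hs
    rw [ht']
    convert h5 using 1
    ring
  obtain ⟨w, hw⟩ := hcomb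
  have hTnat0 : T k x ≠ 0 := by
    rw [heq]
    positivity
  have hsp : (3:ℤ) ^ v = 3 ^ (v - 1) * 3 := by
    rw [← pow_succ]
    congr 1
    omega
  have hdvd1 : (3 : ℤ) ^ (v - 1) ∣ 2 * (T k x : ℤ) := by
    refine ⟨3 * w - t, ?_⟩
    rw [hsp] at hw
    linear_combination hw
  have hdvd1' : (3 : ℕ) ^ (v - 1) ∣ T k x := by
    have hcop : IsCoprime ((3:ℤ) ^ (v - 1)) 2 := by
      refine IsCoprime.pow_left ?_
      rw [Int.isCoprime_iff_gcd_eq_one]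
      decide
    have h7 := hcop.dvd_of_dvd_mul_left (by rwa [mul_comm] at hdvd1)
    exact_mod_cast h7
  have hndvd : ¬ (3 : ℕ) ^ v ∣ T k x := by
    intro hdd
    have hdd' : (3:ℤ) ^ v ∣ 2 * (T k x : ℤ) := by
      have h8 : ((3 ^ v : ℕ) : ℤ) ∣ ((T k x : ℕ) : ℤ) := Int.natCast_dvd_natCast.mpr hdd
      push_cast at h8
      exact h8.mul_left 2
    obtain ⟨u, hu⟩ := hdd'
    have h30 : ((3:ℤ) ^ (v - 1)) ≠ 0 := by positivity
    have ht3 : (t:ℤ) = 3 * (w - u) := by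
      have h9' : (3:ℤ) ^ (v - 1) * (t:ℤ) = 3 ^ (v - 1) * (3 * (w - u)) := by
        rw [hsp] at hw hu
        linear_combination hw - hu
      exact mul_left_cancel₀ h30 h9'
    have : (3:ℤ) ∣ (t:ℤ) := ⟨w - u, ht3⟩
    exact h3nt (by exact_mod_cast this)
  have h3T : 3 ∣ T k x := by
    refine dvd_trans ?_ hdvd1'
    have h10 : (3:ℕ) ^ 1 ∣ 3 ^ (v - 1) := pow_dvd_pow 3 (by omega)
    simpa using h10
  have h3y : 3 ∣ y := hp3.dvd_of_dvd_pow (heq ▸ h3T)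
  have hvy : 1 ≤ padicValNat 3 y := one_le_padicValNat_of_dvd hy.ne' h3y
  have hvT : padicValNat 3 (T k x) = n * padicValNat 3 y := by
    rw [heq]
    exact padicValNat.pow y n
  have hvTle : padicValNat 3 (T k x) ≤ v - 1 := by
    by_contra hcon
    push_neg at hcon
    have h11 : v ≤ padicValNat 3 (T k x) := by omega
    exact hndvd ((padicValNat_dvd_iff_le hTnat0).mpr h11)
  calc n ≤ n * padicValNat 3 y := Nat.le_mul_of_pos_right n (by omega)
    _ = padicValNat 3 (T k x) := hvT.symm
    _ ≤ v - 1 := hvTle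
end

section
/- There are no positive integers $x, k, y, n$ with $n \ge 2$ satisfying $(x+1)^k + (x+2)^k + \cdots + (2x)^k = y^n$ in either of the following situations: (a) $x \equiv 1 \pmod{8}$ or $x \equiv 4 \pmod{8}$, and $k = 1$; (b) $x \equiv 4 \pmod{8}$ or $x \equiv 5 \pmod{8}$, and $k \ge 2$ is even. -/
lemma sum_mod2_range (n : ℕ) : ∑ i ∈ Finset.range n, i % 2 = n / 2 := by
  induction n with
  | zero => simp
  | succ n ih => rw [Finset.sum_range_succ, ih]; omega

lemma sum_mod2_Icc (x : ℕ) :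
    ∑ i ∈ Finset.Icc (x + 1) (2 * x), i % 2 = (2 * x + 1) / 2 - (x + 1) / 2 := by
  have h := Finset.sum_Ico_consecutive (fun i => i % 2) (Nat.zero_le (x + 1))
    (by omega : x + 1 ≤ 2 * x + 1)
  simp only [Nat.Ico_zero_eq_range, sum_mod2_range] at h
  rw [← Finset.Ico_add_one_right_eq_Icc]
  have h2 : ∑ i ∈ Finset.Ico (x + 1) (2 * x + 1), i % 2 = (2 * x + 1) / 2 - (x + 1) / 2 := by
    omega
  simpa using h2

lemma pow_mod4 (i k : ℕ) (hk2 : 2 ≤ k) (hke : Even k) : i ^ k % 4 = i % 2 := by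
  obtain ⟨j, hj⟩ := hke
  have hj1 : 1 ≤ j := by omega
  have hik : i ^ k = (i ^ 2) ^ j := by rw [← pow_mul]; congr 1; omega
  rw [hik, Nat.pow_mod]
  rcases Nat.even_or_odd i with he | ho
  · obtain ⟨a, ha⟩ := he
    have h2 : i ^ 2 % 4 = 0 := by
      have : i ^ 2 = 4 * a ^ 2 := by subst ha; ring
      omega
    rw [h2, Nat.zero_pow (by omega : 0 < j)]
    omega
  · obtain ⟨a, ha⟩ := ho
    have h2 : i ^ 2 % 4 = 1 := by
      have : i ^ 2 = 4 * (a ^ 2 + a) + 1 := by subst ha; ring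
      omega
    rw [h2, one_pow]
    omega

lemma yn_mod4 (y n : ℕ) (hn : 2 ≤ n) : y ^ n % 4 ≠ 2 := by
  rcases Nat.even_or_odd y with he | ho
  · obtain ⟨a, ha⟩ := he
    have hdvd : 4 ∣ y ^ n := by
      calc (4 : ℕ) = 2 * 2 := rfl
        _ ∣ y * y := mul_dvd_mul ⟨a, by omega⟩ ⟨a, by omega⟩
        _ = y ^ 2 := (sq y).symm
        _ ∣ y ^ n := pow_dvd_pow y hn
    omega
  · have : Odd (y ^ n) := ho.pow
    obtain ⟨m, hm⟩ := this
    omega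

lemma T1_two (x : ℕ) : T 1 x * 2 = 3 * x ^ 2 + x := by
  have hc := Finset.sum_Ico_consecutive (fun i => (i : ℕ)) (Nat.zero_le (x + 1))
    (by omega : x + 1 ≤ 2 * x + 1)
  simp only [Nat.Ico_zero_eq_range] at hc
  have g1 := Finset.sum_range_id_mul_two (x + 1)
  have g2 := Finset.sum_range_id_mul_two (2 * x + 1)
  have e1 : (x + 1) * (x + 1 - 1) = x ^ 2 + x := by simp; ring
  have e2 : (2 * x + 1) * (2 * x + 1 - 1) = 4 * x ^ 2 + 2 * x := by simp; ring
  rw [e1] at g1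
  rw [e2] at g2
  have hT : T 1 x = ∑ i ∈ Finset.Ico (x + 1) (2 * x + 1), i := by
    unfold T
    rw [Finset.Ico_add_one_right_eq_Icc]
    simp
  rw [hT]
  have hc' : (∑ i ∈ Finset.range (x + 1), i) + ∑ i ∈ Finset.Ico (x + 1) (2 * x + 1), i
      = ∑ i ∈ Finset.range (2 * x + 1), i := by simpa using hc
  generalize x ^ 2 = q at g1 g2 ⊢
  omega

theorem stmt_9 (x k y n : ℕ) (hx : 0 < x) (hk : 0 < k) (hy : 0 < y) (hn : 2 ≤ n)
    (h : ((x % 8 = 1 ∨ x % 8 = 4) ∧ k = 1) ∨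
         ((x % 8 = 4 ∨ x % 8 = 5) ∧ 2 ≤ k ∧ Even k)) :
    T k x ≠ y ^ n := by
  have hT : T k x % 4 = 2 := by
    rcases h with ⟨hx8, hk1⟩ | ⟨hx8, hk2, hke⟩
    · subst hk1
      have key := T1_two x
      rcases hx8 with h1 | h4
      · obtain ⟨m, hm⟩ : ∃ m, x = 8 * m + 1 := ⟨x / 8, by omega⟩
        obtain ⟨c, hc⟩ : ∃ c, T 1 x * 2 = 8 * c + 4 :=
          ⟨24 * m ^ 2 + 7 * m, by rw [key]; subst hm; ring⟩
        omega
      · obtain ⟨m, hm⟩ : ∃ m, x = 8 * m + 4 := ⟨x / 8, by omega⟩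
        obtain ⟨c, hc⟩ : ∃ c, T 1 x * 2 = 8 * c + 4 :=
          ⟨24 * m ^ 2 + 25 * m + 6, by rw [key]; subst hm; ring⟩
        omega
    · have h1 : T k x % 4 = (∑ i ∈ Finset.Icc (x + 1) (2 * x), i ^ k % 4) % 4 := by
        unfold T; rw [Finset.sum_nat_mod]
      have h2 : ∑ i ∈ Finset.Icc (x + 1) (2 * x), i ^ k % 4
          = ∑ i ∈ Finset.Icc (x + 1) (2 * x), i % 2 :=
        Finset.sum_congr rfl (fun i _ => pow_mod4 i k hk2 hke)
      rw [h1, h2, sum_mod2_Icc]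
      omega
  intro heq
  exact yn_mod4 y n hn (heq ▸ hT)
end

section
/- For every positive integer $x$, $(x+1) + (x+2) + \cdots + (2x) = \frac{x(3x+1)}{2}$. Moreover: (i) for every even integer $k \ge 2$ there exist a positive integer $D_k$ and a polynomial $M_k(X)$ with integer coefficients such that $D_k \cdot \big((x+1)^k + \cdots + (2x)^k\big) = x(2x+1) M_k(x)$ for all positive integers $x$; (ii) for every odd integer $k > 1$ there exist a positive integer $D_k$ and a polynomial $M_k(X)$ with integer coefficients such that $D_k \cdot \big((x+1)^k + \cdots + (2x)^k\big) = x^2(3x+1) M_k(x)$ for all positive integers $x$. -/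
open Polynomial Finset

noncomputable def Pk (k : ℕ) : ℚ[X] :=
  ∑ i ∈ Finset.range (k + 1),
    Polynomial.C (_root_.bernoulli i * ((k + 1).choose i) / (k + 1)) * X ^ (k + 1 - i)

lemma Pk_eval (k n : ℕ) : (Pk k).eval (n : ℚ) = ∑ j ∈ Finset.range n, (j : ℚ) ^ k := by
  rw [sum_range_pow, Pk, eval_finset_sum]
  refine Finset.sum_congr rfl fun i _ => ?_
  push_cast
  simp [mul_div_right_comm]

lemma nat_eval_eq (f g : ℚ[X]) (h : ∀ n : ℕ, f.eval (n : ℚ) = g.eval (n : ℚ)) : f = g := by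
  have : f - g = 0 := by
    apply eq_zero_of_infinite_isRoot
    apply Set.infinite_of_injective_forall_mem (f := fun n : ℕ => (n : ℚ))
      (Nat.cast_injective)
    intro n
    simp [IsRoot, h n]
  exact sub_eq_zero.mp this

lemma Pk_diff (k : ℕ) : (Pk k).comp (X + 1) - Pk k = X ^ k := by
  apply nat_eval_eq
  intro n
  simp only [eval_sub, eval_comp, eval_add, eval_X, eval_one, eval_pow]
  rw [show ((n : ℚ) + 1) = ((n + 1 : ℕ) : ℚ) by push_cast; ring, Pk_eval, Pk_eval,
    Finset.sum_range_succ]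
  ring

lemma Pk_zero (k : ℕ) : (Pk k).eval 0 = 0 := by
  have := Pk_eval k 0; simpa using this

lemma Pk_one (k : ℕ) (hk : 1 ≤ k) : (Pk k).eval 1 = 0 := by
  have := Pk_eval k 1
  simp only [Nat.cast_one, Finset.sum_range_one, Nat.cast_zero] at this
  rw [this, zero_pow (by omega)]

lemma Pk_sym (k : ℕ) (hk : 1 ≤ k) :
    Pk k = Polynomial.C ((-1 : ℚ) ^ (k + 1)) * (Pk k).comp (1 - X) := by
  apply nat_eval_eq
  intro n
  induction n with
  | zero =>
    simp only [Nat.cast_zero, eval_mul, eval_C, eval_comp, eval_sub, eval_one, eval_X, sub_zero]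
    rw [Pk_zero, Pk_one k hk, mul_zero]
  | succ n ih =>
    have hd : ∀ y : ℚ, (Pk k).eval (y + 1) - (Pk k).eval y = y ^ k := by
      intro y
      have := congrArg (Polynomial.eval y) (Pk_diff k)
      simpa [eval_comp] using this
    have h1 : (Pk k).eval ((n : ℚ) + 1) = (Pk k).eval (n : ℚ) + (n : ℚ) ^ k := by
      have := hd (n : ℚ); linarith
    have h2 : (Pk k).eval (1 - ((n : ℚ) + 1)) = (Pk k).eval (1 - (n : ℚ)) - (-(n : ℚ)) ^ k := by
      have := hd (-(n : ℚ)); rw [show (-(n:ℚ)) + 1 = 1 - (n:ℚ) by ring] at this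
      rw [show (1 : ℚ) - ((n:ℚ) + 1) = -(n:ℚ) by ring]; linarith
    push_cast
    simp only [eval_mul, eval_C, eval_comp, eval_sub, eval_one, eval_X] at ih ⊢
    rw [h1, h2, ih]
    rcases Nat.even_or_odd k with he | ho
    · rw [he.neg_pow, Odd.neg_one_pow (he.add_one)]
      ring
    · rw [ho.neg_pow, Even.neg_one_pow (ho.add_one)]
      ring

noncomputable def qk (k : ℕ) : ℚ[X] := (Pk k).comp (2 * X + 1) - (Pk k).comp (X + 1)

lemma qk_eval (k x : ℕ) : (qk k).eval (x : ℚ) = (T k x : ℚ) := by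
  have hsplit : ∑ i ∈ Finset.range (x + 1), i ^ k + T k x
      = ∑ i ∈ Finset.range (2 * x + 1), i ^ k := by
    rw [T, ← Finset.Ico_add_one_right_eq_Icc, Finset.range_eq_Ico, Finset.range_eq_Ico]
    exact Finset.sum_Ico_consecutive _ (by omega) (by omega)
  have hq : (qk k).eval (x : ℚ)
      = (∑ j ∈ Finset.range (2 * x + 1), (j:ℚ) ^ k) - ∑ j ∈ Finset.range (x + 1), (j:ℚ) ^ k := by
    simp only [qk, eval_sub, eval_comp, eval_add, eval_mul, eval_X, eval_one, eval_ofNat]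
    rw [show (2 * (x:ℚ) + 1) = ((2*x+1 : ℕ) : ℚ) by push_cast; ring,
      show ((x:ℚ) + 1) = ((x+1 : ℕ) : ℚ) by push_cast; ring, Pk_eval, Pk_eval]
  rw [hq]
  have := congrArg (fun n : ℕ => (n : ℚ)) hsplit
  push_cast at this
  linarith

lemma qk_zero (k : ℕ) : (qk k).eval 0 = 0 := by
  have := qk_eval k 0
  simpa [T] using this

lemma qk_half (k : ℕ) (hk : 2 ≤ k) (he : Even k) : (qk k).eval (-(1/2) : ℚ) = 0 := by
  have hsym := congrArg (Polynomial.eval ((1:ℚ)/2)) (Pk_sym k (by omega))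
  simp only [eval_mul, eval_C, eval_comp, eval_sub, eval_one, eval_X,
    Odd.neg_one_pow (he.add_one)] at hsym
  norm_num at hsym
  have h2 : (Pk k).eval ((1:ℚ)/2) = 0 := by linarith
  simp only [qk, eval_sub, eval_comp, eval_add, eval_mul, eval_X, eval_one, eval_ofNat]
  norm_num [h2, Pk_zero]

lemma qk_third (k : ℕ) (hk : 1 < k) (ho : Odd k) : (qk k).eval (-(1/3) : ℚ) = 0 := by
  have hsym := congrArg (Polynomial.eval ((2:ℚ)/3)) (Pk_sym k (by omega))
  simp only [eval_mul, eval_C, eval_comp, eval_sub, eval_one, eval_X,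
    Even.neg_one_pow (ho.add_one), one_mul] at hsym
  simp only [qk, eval_sub, eval_comp, eval_add, eval_mul, eval_X, eval_one, eval_ofNat]
  rw [show (2 * (-(1/3):ℚ) + 1) = 1 - 2/3 by ring, show ((-(1/3):ℚ) + 1) = 2/3 by ring]
  rw [← hsym]
  ring

lemma Pk_deriv_one (k : ℕ) (hk : 1 < k) (ho : Odd k) :
    (derivative (Pk k)).eval 1 = 0 := by
  have h1 : (derivative (Pk k)).eval 1 = (derivative (Pk k)).eval 0 := by
    have := congrArg (fun p => Polynomial.eval 0 (derivative p)) (Pk_diff k)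
    simp only [derivative_sub, derivative_comp, derivative_add, derivative_X, derivative_one,
      add_zero, one_mul, derivative_pow, derivative_X, mul_one, eval_sub, eval_comp, eval_add,
      eval_X, eval_one, eval_mul, eval_pow, eval_natCast] at this
    rw [zero_pow (by omega), zero_add] at this
    simp at this
    linarith
  have h2 : (derivative (Pk k)).eval 0 = -((derivative (Pk k)).eval 1) := by
    have := congrArg (fun p => Polynomial.eval 0 (derivative p)) (Pk_sym k (by omega))
    simp only [Even.neg_one_pow (ho.add_one), map_one, one_mul, derivative_comp,
      derivative_sub, derivative_one, derivative_X, zero_sub, eval_mul, eval_neg, eval_comp,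
      eval_sub, eval_one, eval_X, sub_zero, neg_one_mul] at this
    simpa using this
  linarith

lemma qk_deriv_zero (k : ℕ) (hk : 1 < k) (ho : Odd k) :
    (derivative (qk k)).eval 0 = 0 := by
  simp only [qk, derivative_sub, derivative_comp, derivative_add, derivative_mul, derivative_X,
    derivative_one, derivative_ofNat, add_zero, eval_sub, eval_mul, eval_comp, eval_add,
    eval_X, eval_one, eval_ofNat]
  norm_num
  have := Pk_deriv_one k hk ho
  linarith [this]

lemma clear_denoms (r : ℚ[X]) : ∃ D : ℕ, 0 < D ∧ ∃ M : Polynomial ℤ,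
    M.map (Int.castRingHom ℚ) = (D : ℚ) • r := by
  obtain ⟨b, hb⟩ := IsLocalization.integerNormalization_map_to_map (nonZeroDivisors ℤ) r
  have hbne : (b : ℤ) ≠ 0 := nonZeroDivisors.coe_ne_zero b
  rw [show algebraMap ℤ ℚ = Int.castRingHom ℚ from rfl] at hb
  rcases lt_or_gt_of_ne hbne with hneg | hpos
  · refine ⟨(-(b:ℤ)).toNat, by omega,
      -(IsLocalization.integerNormalization (nonZeroDivisors ℤ) r), ?_⟩
    have hcast : (((-(b:ℤ)).toNat : ℕ) : ℚ) = ((-(b:ℤ) : ℤ) : ℚ) := by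
      exact_mod_cast congrArg (fun z : ℤ => (z:ℚ)) (Int.toNat_of_nonneg (by omega))
    rw [Polynomial.map_neg, hb, hcast]
    rw [Int.cast_smul_eq_zsmul, neg_zsmul]
  · refine ⟨(b:ℤ).toNat, by omega, IsLocalization.integerNormalization (nonZeroDivisors ℤ) r, ?_⟩
    have hcast : ((((b:ℤ)).toNat : ℕ) : ℚ) = (((b:ℤ) : ℤ) : ℚ) := by
      exact_mod_cast congrArg (fun z : ℤ => (z:ℚ)) (Int.toNat_of_nonneg (by omega))
    rw [hb, hcast, Int.cast_smul_eq_zsmul]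

lemma part1 (x : ℕ) : (T 1 x : ℚ) = ((x : ℚ) * (3 * (x:ℚ) + 1)) / 2 := by
  have hsplit : ∑ i ∈ Finset.range (x + 1), i ^ 1 + T 1 x
      = ∑ i ∈ Finset.range (2 * x + 1), i ^ 1 := by
    rw [T, ← Finset.Ico_add_one_right_eq_Icc, Finset.range_eq_Ico, Finset.range_eq_Ico]
    exact Finset.sum_Ico_consecutive _ (by omega) (by omega)
  simp only [pow_one] at hsplit
  have g1 := Finset.sum_range_id_mul_two (x + 1)
  have g2 := Finset.sum_range_id_mul_two (2 * x + 1)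
  simp only [Nat.add_sub_cancel] at g1 g2
  have c : ((∑ i ∈ Finset.range (x+1), i : ℕ) : ℚ) + (T 1 x : ℚ)
      = ((∑ i ∈ Finset.range (2*x+1), i : ℕ) : ℚ) := by exact_mod_cast hsplit
  have cg1 : ((∑ i ∈ Finset.range (x+1), i : ℕ) : ℚ) * 2 = ((x:ℚ)+1) * x := by
    exact_mod_cast g1
  have cg2 : ((∑ i ∈ Finset.range (2*x+1), i : ℕ) : ℚ) * 2 = (2*(x:ℚ)+1) * (2*x) := by
    exact_mod_cast g2
  linear_combination c - cg1 / 2 + cg2 / 2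

lemma even_case (k : ℕ) (hk : 2 ≤ k) (he : Even k) : ∃ D : ℕ, 0 < D ∧ ∃ M : Polynomial ℤ,
    ∀ x : ℕ, 0 < x → (D : ℤ) * (T k x : ℤ) = (x:ℤ) * (2*(x:ℤ)+1) * M.eval (x:ℤ) := by
  have h0 : (X - C (0:ℚ)) ∣ qk k := dvd_iff_isRoot.mpr (by simpa [IsRoot] using qk_zero k)
  have hh : (X - C (-(1/2):ℚ)) ∣ qk k := dvd_iff_isRoot.mpr (qk_half k hk he)
  have hcop : IsCoprime (X - C (0:ℚ)) (X - C (-(1/2):ℚ)) :=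
    isCoprime_X_sub_C_of_isUnit_sub (by norm_num)
  obtain ⟨r, hr⟩ := hcop.mul_dvd h0 hh
  obtain ⟨D, hD, M, hM⟩ := clear_denoms r
  refine ⟨2 * D, by omega, M, fun x hx => ?_⟩
  have hMx : ((M.eval ((x:ℕ):ℤ) : ℤ) : ℚ) = (D:ℚ) * r.eval ((x:ℕ):ℚ) := by
    have h := eval_intCast_map (Int.castRingHom ℚ) M ((x:ℕ):ℤ)
    rw [hM] at h
    simp only [eval_smul, smul_eq_mul, Int.cast_natCast, eq_intCast] at h
    rw [← h]
  have key : (((2*D : ℕ)):ℚ) * (T k x : ℚ)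
      = (x:ℚ) * (2*(x:ℚ)+1) * ((M.eval ((x:ℕ):ℤ) : ℤ) : ℚ) := by
    rw [← qk_eval, hr, hMx]
    simp only [eval_mul, eval_sub, eval_X, eval_C]
    push_cast
    ring
  exact_mod_cast key

lemma odd_case (k : ℕ) (hk : 1 < k) (ho : Odd k) : ∃ D : ℕ, 0 < D ∧ ∃ M : Polynomial ℤ,
    ∀ x : ℕ, 0 < x → (D : ℤ) * (T k x : ℤ) = (x:ℤ)^2 * (3*(x:ℤ)+1) * M.eval (x:ℤ) := by
  obtain ⟨s, hs⟩ : (X - C (0:ℚ)) ∣ qk k :=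
    dvd_iff_isRoot.mpr (by simpa [IsRoot] using qk_zero k)
  have hs0 : s.eval 0 = 0 := by
    have h := congrArg (fun p => Polynomial.eval 0 (derivative p)) hs
    simp only [derivative_mul, derivative_sub, derivative_X, derivative_C, sub_zero, one_mul,
      eval_add, eval_mul, eval_sub, eval_X, eval_C, map_zero] at h
    rw [qk_deriv_zero k hk ho] at h
    simpa using h.symm
  obtain ⟨t, ht⟩ : (X - C (0:ℚ)) ∣ s := dvd_iff_isRoot.mpr (by simpa [IsRoot] using hs0)
  have hsq : qk k = (X - C (0:ℚ))^2 * t := by rw [hs, ht]; ring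
  have hth : (X - C (-(1/3):ℚ)) ∣ qk k := dvd_iff_isRoot.mpr (qk_third k hk ho)
  have hcop : IsCoprime ((X - C (0:ℚ))^2) (X - C (-(1/3):ℚ)) :=
    (isCoprime_X_sub_C_of_isUnit_sub (by norm_num)).pow_left
  obtain ⟨r, hr⟩ := hcop.mul_dvd ⟨t, hsq⟩ hth
  obtain ⟨D, hD, M, hM⟩ := clear_denoms r
  refine ⟨3 * D, by omega, M, fun x hx => ?_⟩
  have hMx : ((M.eval ((x:ℕ):ℤ) : ℤ) : ℚ) = (D:ℚ) * r.eval ((x:ℕ):ℚ) := by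
    have h := eval_intCast_map (Int.castRingHom ℚ) M ((x:ℕ):ℤ)
    rw [hM] at h
    simp only [eval_smul, smul_eq_mul, Int.cast_natCast, eq_intCast] at h
    rw [← h]
  have key : (((3*D : ℕ)):ℚ) * (T k x : ℚ)
      = (x:ℚ)^2 * (3*(x:ℚ)+1) * ((M.eval ((x:ℕ):ℤ) : ℤ) : ℚ) := by
    rw [← qk_eval, hr, hMx]
    simp only [eval_mul, eval_sub, eval_X, eval_C, eval_pow]
    push_cast
    ring
  exact_mod_cast key

theorem stmt_12 :
    (∀ x : ℕ, 0 < x → (T 1 x : ℚ) = (x * (3 * x + 1)) / 2) ∧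
    (∀ k : ℕ, 2 ≤ k → Even k → ∃ D : ℕ, 0 < D ∧ ∃ M : Polynomial ℤ,
      ∀ x : ℕ, 0 < x →
        (D : ℤ) * (T k x : ℤ) = (x : ℤ) * (2 * (x : ℤ) + 1) * M.eval (x : ℤ)) ∧
    (∀ k : ℕ, 1 < k → Odd k → ∃ D : ℕ, 0 < D ∧ ∃ M : Polynomial ℤ,
      ∀ x : ℕ, 0 < x →
        (D : ℤ) * (T k x : ℤ) = (x : ℤ) ^ 2 * (3 * (x : ℤ) + 1) * M.eval (x : ℤ)) :=
  ⟨fun x _ => part1 x, fun k hk he => even_case k hk he, fun k hk ho => odd_case k hk ho⟩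
end

section
/- Let $p$ be a prime, let $d, q$ be nonnegative integers, let $k$ be a positive integer, and let $m_1, m_2$ be nonnegative integers each of which is either $0$ or divisible by $p^d$. Then $S_k(q m_1 + m_2) \equiv q\, S_k(m_1) + S_k(m_2) \pmod{p^d}$. -/
/-- `S k x = 1^k + 2^k + ... + x^k` (with `S k 0 = 0`). -/
def S (k x : ℕ) : ℕ := ∑ i ∈ Finset.Icc 1 x, i ^ k

lemma S_shift (n k x m : ℕ) (hx : n ∣ x) :
    S k (x + m) ≡ S k x + S k m [MOD n] := by
  have hsplit : S k (x + m) = S k x + ∑ j ∈ Finset.Icc 1 m, (x + j) ^ k := by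
    unfold S
    rw [show Finset.Icc 1 (x + m) = Finset.Ioc 0 (x + m) by rfl,
        show Finset.Icc 1 x = Finset.Ioc 0 x by rfl,
        ← Finset.sum_Ioc_consecutive (fun i => i ^ k) (by omega : 0 ≤ x) (by omega : x ≤ x + m)]
    congr 1
    rw [show Finset.Ioc x (x + m) = (Finset.Icc 1 m).map (addLeftEmbedding x) by
        ext a
        simp only [Finset.mem_Ioc, Finset.mem_map, Finset.mem_Icc, addLeftEmbedding_apply]
        constructor
        · intro h; exact ⟨a - x, by omega, by omega⟩
        · rintro ⟨b, hb, rfl⟩; omega]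
    rw [Finset.sum_map]
    rfl
  rw [hsplit]
  refine Nat.ModEq.add_left _ ?_
  unfold S
  rw [← ZMod.natCast_eq_natCast_iff]
  push_cast
  refine Finset.sum_congr rfl (fun i _ => ?_)
  have hx0 : (x : ZMod n) = 0 := (ZMod.natCast_eq_zero_iff x n).mpr hx
  rw [hx0, zero_add]

theorem stmt_13 (p : ℕ) (hp : p.Prime) (d q k : ℕ) (hk : 0 < k) (m₁ m₂ : ℕ)
    (hm₁ : m₁ = 0 ∨ p ^ d ∣ m₁) (hm₂ : m₂ = 0 ∨ p ^ d ∣ m₂) :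
    S k (q * m₁ + m₂) ≡ q * S k m₁ + S k m₂ [MOD p ^ d] := by
  rcases hm₁ with rfl | hm₁
  · simpa [S] using Nat.ModEq.refl _
  · have hm₂' : p ^ d ∣ m₂ := by
      rcases hm₂ with rfl | h
      · exact dvd_zero _
      · exact h
    induction q with
    | zero => simpa using Nat.ModEq.refl _
    | succ q ih =>
      have hx : p ^ d ∣ q * m₁ + m₂ := dvd_add (Dvd.dvd.mul_left hm₁ q) hm₂'
      have h1 : S k ((q + 1) * m₁ + m₂) ≡ S k (q * m₁ + m₂) + S k m₁ [MOD p ^ d] := by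
        have := S_shift (p ^ d) k (q * m₁ + m₂) m₁ hx
        rw [show (q + 1) * m₁ + m₂ = q * m₁ + m₂ + m₁ by ring]
        exact this
      calc S k ((q + 1) * m₁ + m₂) ≡ S k (q * m₁ + m₂) + S k m₁ [MOD p ^ d] := h1
        _ ≡ (q * S k m₁ + S k m₂) + S k m₁ [MOD p ^ d] := Nat.ModEq.add_right _ ih
        _ = (q + 1) * S k m₁ + S k m₂ := by ring
end

section
/- Let $q, k, t$ be positive integers with $q$ odd. If $k = 1$ or $k$ is even, then $v_2(T_k(2^t q)) = t - 1$; if $k \ge 3$ is odd, then $v_2(T_k(2^t q)) = 2t - 2$. -/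
lemma sum_natModEq {ι : Type*} {s : Finset ι} {f g : ι → ℕ} {n : ℕ}
    (h : ∀ i ∈ s, f i ≡ g i [MOD n]) : (∑ i ∈ s, f i) ≡ (∑ i ∈ s, g i) [MOD n] := by
  classical
  induction s using Finset.induction with
  | empty => rfl
  | insert _ _ hx ih =>
    rw [Finset.sum_insert hx, Finset.sum_insert hx]
    exact Nat.ModEq.add (h _ (Finset.mem_insert_self _ _))
      (ih fun i hi => h i (Finset.mem_insert_of_mem hi))

lemma sum_intModEq {ι : Type*} {s : Finset ι} {f g : ι → ℤ} {n : ℤ}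
    (h : ∀ i ∈ s, f i ≡ g i [ZMOD n]) : (∑ i ∈ s, f i) ≡ (∑ i ∈ s, g i) [ZMOD n] := by
  classical
  induction s using Finset.induction with
  | empty => rfl
  | insert _ _ hx ih =>
    rw [Finset.sum_insert hx, Finset.sum_insert hx]
    exact Int.ModEq.add (h _ (Finset.mem_insert_self _ _))
      (ih fun i hi => h i (Finset.mem_insert_of_mem hi))

lemma natModEq_int {a b n : ℕ} (h : a ≡ b [MOD n]) : (a : ℤ) ≡ (b : ℤ) [ZMOD (n : ℤ)] := by
  unfold Int.ModEq
  rw [← Int.natCast_mod, ← Int.natCast_mod]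
  exact_mod_cast h

lemma binomCong (a c : ℤ) : ∀ k : ℕ, (a + c)^k ≡ a^k + k * c * a^(k-1) [ZMOD c^2]
  | 0 => by simp
  | 1 => by simp
  | (n+2) => by
    have IH := binomCong a c (n+1)
    simp only [Nat.add_sub_cancel] at IH ⊢
    calc (a + c)^(n+2) = (a+c)^(n+1) * (a+c) := by ring
      _ ≡ (a^(n+1) + (↑(n+1):ℤ) * c * a^n) * (a+c) [ZMOD c^2] := IH.mul_right _
      _ ≡ a^(n+2) + (↑(n+2):ℤ) * c * a^(n+1) [ZMOD c^2] := by
          apply Int.ModEq.symm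
          apply Int.modEq_iff_dvd.mpr
          refine ⟨(↑n + 1) * a^n, ?_⟩
          push_cast; ring

lemma keyPowCong {k : ℕ} (hk : Even k) (b M : ℕ) :
    (b + 2^(M+1))^k ≡ b^k [MOD 2^(M+2)] := by
  obtain ⟨m, rfl⟩ := hk
  have hsq : (b + 2^(M+1))^2 ≡ b^2 [MOD 2^(M+2)] := by
    rw [show (b + 2^(M+1))^2 = b^2 + 2^(M+2) * (b + 2^M) by ring]
    exact Nat.add_mul_mod_self_left _ _ _
  calc (b + 2^(M+1))^(m+m) = ((b + 2^(M+1))^2)^m := by rw [← pow_mul]; ring_nf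
    _ ≡ (b^2)^m [MOD 2^(M+2)] := hsq.pow m
    _ = b^(m+m) := by rw [← pow_mul]; ring_nf

lemma oddSumCong {k : ℕ} (hk : Even k) : ∀ N : ℕ,
    (∑ s ∈ Finset.range (2^N), (2*s+1)^k) ≡ 2^N [MOD 2^(N+1)]
  | 0 => by simp [Nat.ModEq]
  | (N+1) => by
    have IH := oddSumCong hk N
    have IH2 := IH.mul_left' 2
    rw [show 2 * 2^(N+1) = 2^(N+2) by ring, show 2 * 2^N = 2^(N+1) by ring] at IH2
    have hterm : ∀ s ∈ Finset.range (2^N), (2*(2^N + s)+1)^k ≡ (2*s+1)^k [MOD 2^(N+2)] := by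
      intro s _
      rw [show 2*(2^N + s)+1 = (2*s+1) + 2^(N+1) by ring]
      exact keyPowCong hk (2*s+1) N
    calc (∑ s ∈ Finset.range (2^(N+1)), (2*s+1)^k)
        = (∑ s ∈ Finset.range (2^N), (2*s+1)^k) + ∑ s ∈ Finset.range (2^N), (2*(2^N + s)+1)^k := by
          rw [show (2:ℕ)^(N+1) = 2^N + 2^N by ring, Finset.sum_range_add]
      _ ≡ (∑ s ∈ Finset.range (2^N), (2*s+1)^k) + ∑ s ∈ Finset.range (2^N), (2*s+1)^k [MOD 2^(N+2)] :=
          Nat.ModEq.add_left _ (sum_natModEq hterm)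
      _ = 2 * ∑ s ∈ Finset.range (2^N), (2*s+1)^k := by ring
      _ ≡ 2^(N+2) * 0 + 2^(N+1) [MOD 2^(N+2)] := by simpa using IH2
      _ = 2^(N+1) := by ring

lemma evensplit (n : ℕ) (f : ℕ → ℕ) : ∑ r ∈ Finset.range (2*n), f r
    = (∑ s ∈ Finset.range n, f (2*s)) + ∑ s ∈ Finset.range n, f (2*s+1) := by
  induction n with
  | zero => simp
  | succ n ih =>
    rw [show 2*(n+1) = (2*n) + 1 + 1 by ring, Finset.sum_range_succ, Finset.sum_range_succ,
      Finset.sum_range_succ (fun s => f (2*s)), Finset.sum_range_succ (fun s => f (2*s+1)), ih]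
    omega

lemma fullSumCong {k : ℕ} (hk : Even k) (hk2 : 2 ≤ k) : ∀ N : ℕ,
    (∑ r ∈ Finset.range (2^(N+1)), r^k) ≡ 2^N [MOD 2^(N+1)]
  | 0 => by
    have h2 : (2:ℕ)^(0+1) = 2 := rfl
    have hs : (∑ r ∈ Finset.range 2, r^k) = 1 := by
      simp [Finset.sum_range_succ, zero_pow (by omega : k ≠ 0)]
    rw [h2, hs]
    decide
  | (N+1) => by
    have IH := fullSumCong hk hk2 N
    have hkk : (2:ℕ)^k = 4 * 2^(k-2) := by
      rw [show k = 2 + (k-2) by omega, pow_add]; norm_num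
    have hdvd : 2^(N+2) ∣ 2^k * ∑ s ∈ Finset.range (2^(N+1)), s^k := by
      have h1 : 2^N ∣ ∑ s ∈ Finset.range (2^(N+1)), s^k := by
        have := Nat.div_add_mod (∑ s ∈ Finset.range (2^(N+1)), s^k) (2^(N+1))
        have hm : (∑ s ∈ Finset.range (2^(N+1)), s^k) % 2^(N+1) = 2^N := by
          rw [IH]; exact Nat.mod_eq_of_lt (by exact Nat.pow_lt_pow_right one_lt_two (by omega))
        refine ⟨2 * ((∑ s ∈ Finset.range (2^(N+1)), s^k) / 2^(N+1)) + 1, ?_⟩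
        rw [hm] at this
        calc (∑ s ∈ Finset.range (2^(N+1)), s^k) = 2^(N+1) * ((∑ s ∈ Finset.range (2^(N+1)), s^k) / 2^(N+1)) + 2^N := this.symm
          _ = 2^N * (2 * ((∑ s ∈ Finset.range (2^(N+1)), s^k) / 2^(N+1)) + 1) := by ring
      obtain ⟨c, hc⟩ := h1
      exact ⟨2^(k-2) * c, by rw [hc, hkk]; ring⟩
    calc (∑ r ∈ Finset.range (2^(N+2)), r^k)
        = (∑ s ∈ Finset.range (2^(N+1)), (2*s)^k) + ∑ s ∈ Finset.range (2^(N+1)), (2*s+1)^k := by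
          rw [show (2:ℕ)^(N+2) = 2 * 2^(N+1) by ring, evensplit]
      _ = 2^k * (∑ s ∈ Finset.range (2^(N+1)), s^k) + ∑ s ∈ Finset.range (2^(N+1)), (2*s+1)^k := by
          rw [Finset.mul_sum]; congr 1; funext; exact Finset.sum_congr rfl (fun s _ => by rw [mul_pow])
      _ ≡ 0 + 2^(N+1) [MOD 2^(N+2)] := Nat.ModEq.add ((Nat.modEq_zero_iff_dvd).mpr hdvd) (oddSumCong hk (N+1))
      _ = 2^(N+1) := by ring

lemma shiftSum (k N : ℕ) : ∀ a : ℕ,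
    (∑ i ∈ Finset.Ico a (a + 2^N), i^k) ≡ (∑ r ∈ Finset.range (2^N), r^k) [MOD 2^N]
  | 0 => by rw [Finset.range_eq_Ico]; simp; exact Nat.ModEq.refl _
  | (a+1) => by
    have IH := shiftSum k N a
    have hpos : 0 < 2^N := Nat.pow_pos (by norm_num)
    have e1 : (∑ i ∈ Finset.Ico a (a + 2^N + 1), i^k)
        = (∑ i ∈ Finset.Ico a (a + 2^N), i^k) + (a + 2^N)^k :=
      Finset.sum_Ico_succ_top (by omega) _
    have e2 : (∑ i ∈ Finset.Ico a (a + 2^N + 1), i^k)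
        = a^k + ∑ i ∈ Finset.Ico (a+1) (a + 2^N + 1), i^k :=
      Finset.sum_eq_sum_Ico_succ_bot (by omega) _
    have hshift : (a + 2^N)^k ≡ a^k [MOD 2^N] :=
      Nat.ModEq.pow k (by simpa using (Nat.add_mul_mod_self_right a (2^N) 1 ▸ rfl : (a + 2^N*1) % 2^N = (a + 2^N*1) % 2^N))
    have key : (∑ i ∈ Finset.Ico (a+1) ((a+1) + 2^N), i^k) + a^k
        ≡ (∑ r ∈ Finset.range (2^N), r^k) + a^k [MOD 2^N] := by
      have : (∑ i ∈ Finset.Ico (a+1) ((a+1) + 2^N), i^k) + a^k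
          = (∑ i ∈ Finset.Ico a (a + 2^N), i^k) + (a + 2^N)^k := by
        rw [show (a+1) + 2^N = a + 2^N + 1 by omega] at *
        omega
      rw [this]
      exact Nat.ModEq.add IH hshift
    exact Nat.ModEq.add_right_cancel' _ key

-- L2: blocks

lemma blockSum (k N : ℕ) : ∀ (m : ℕ) (a : ℕ),
    (∑ i ∈ Finset.Ico a (a + m * 2^N), i^k) ≡ m * (∑ r ∈ Finset.range (2^N), r^k) [MOD 2^N]
  | 0, a => by simp; exact Nat.ModEq.refl _
  | (m+1), a => by
    have IH := blockSum k N m a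
    have h1 : (∑ i ∈ Finset.Ico a (a + m * 2^N), i^k) + (∑ i ∈ Finset.Ico (a + m * 2^N) (a + (m+1) * 2^N), i^k)
        = ∑ i ∈ Finset.Ico a (a + (m+1) * 2^N), i^k :=
      Finset.sum_Ico_consecutive _ (by omega) (by nlinarith [(Nat.pow_pos (show 0 < 2 by norm_num) : 0 < 2^N)])
    have h2 : (∑ i ∈ Finset.Ico (a + m * 2^N) ((a + m * 2^N) + 2^N), i^k) ≡ (∑ r ∈ Finset.range (2^N), r^k) [MOD 2^N] :=
      shiftSum k N _
    rw [show a + (m+1) * 2^N = (a + m * 2^N) + 2^N by ring] at h1 ⊢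
    calc (∑ i ∈ Finset.Ico a ((a + m * 2^N) + 2^N), i^k)
        = (∑ i ∈ Finset.Ico a (a + m * 2^N), i^k) + (∑ i ∈ Finset.Ico (a + m * 2^N) ((a + m * 2^N) + 2^N), i^k) := h1.symm
      _ ≡ m * (∑ r ∈ Finset.range (2^N), r^k) + (∑ r ∈ Finset.range (2^N), r^k) [MOD 2^N] := Nat.ModEq.add IH h2
      _ = (m+1) * (∑ r ∈ Finset.range (2^N), r^k) := by ring

lemma oddMulPow {w t : ℕ} (hw : Odd w) (ht : 1 ≤ t) : w * 2^(t-1) ≡ 2^(t-1) [MOD 2^t] := by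
  obtain ⟨v, rfl⟩ := hw
  have h2 : (2:ℕ)^t = 2 * 2^(t-1) := by
    rw [← pow_succ']
    congr 1; omega
  calc (2*v+1) * 2^(t-1) = 2^(t-1) + (2*2^(t-1)) * v := by ring
    _ ≡ 2^(t-1) [MOD 2^t] := by rw [← h2]; exact Nat.add_mul_mod_self_left _ _ _

lemma evenCong {q k t : ℕ} (hq : Odd q) (ht : 1 ≤ t) (hk : k = 1 ∨ (Even k ∧ 2 ≤ k)) :
    T k (2^t * q) ≡ 2^(t-1) [MOD 2^t] := by
  have hT : T k (2^t * q) = ∑ i ∈ Finset.Ico (2^t*q + 1) ((2^t*q + 1) + q * 2^t), i^k := by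
    unfold T
    rw [← Finset.Ico_add_one_right_eq_Icc,
      show 2*(2^t*q)+1 = (2^t*q+1)+q*2^t by ring]
  have hblock := blockSum k t q (2^t*q + 1)
  rcases hk with h1 | ⟨he, h2⟩
  · subst h1
    have hC : (∑ r ∈ Finset.range (2^t), r^(1:ℕ)) = 2^(t-1) * (2^t - 1) := by
      have g := Finset.sum_range_id_mul_two (2^t)
      have h2t : (2:ℕ)^(t-1) * 2 = 2^t := by
        rw [← pow_succ]; congr 1; omega
      have : (2^(t-1) * (2^t - 1)) * 2 = 2^t * (2^t - 1) := by
        rw [mul_right_comm, h2t]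
      simp only [pow_one]
      omega
    have hodd : Odd (q * (2^t - 1)) := by
      refine hq.mul ?_
      refine Nat.Even.sub_odd (Nat.one_le_two_pow) ?_ odd_one
      rw [Nat.even_pow]
      exact ⟨even_two, by omega⟩
    calc T 1 (2^t * q) = ∑ i ∈ Finset.Ico (2^t*q + 1) ((2^t*q + 1) + q * 2^t), i^(1:ℕ) := hT
      _ ≡ q * (∑ r ∈ Finset.range (2^t), r^(1:ℕ)) [MOD 2^t] := hblock
      _ = (q * (2^t - 1)) * 2^(t-1) := by rw [hC]; ring
      _ ≡ 2^(t-1) [MOD 2^t] := oddMulPow hodd ht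
  · have hC : (∑ r ∈ Finset.range (2^t), r^k) ≡ 2^(t-1) [MOD 2^t] := by
      have := fullSumCong he h2 (t-1)
      rwa [show t - 1 + 1 = t by omega] at this
    calc T k (2^t * q) = ∑ i ∈ Finset.Ico (2^t*q + 1) ((2^t*q + 1) + q * 2^t), i^k := hT
      _ ≡ q * (∑ r ∈ Finset.range (2^t), r^k) [MOD 2^t] := hblock
      _ ≡ q * 2^(t-1) [MOD 2^t] := hC.mul_left q
      _ = q * 2^(t-1) := rfl
      _ ≡ 2^(t-1) [MOD 2^t] := oddMulPow hq ht

lemma padic_of_cong {n m : ℕ} (h : m ≡ 2^n [MOD 2^(n+1)]) : padicValNat 2 m = n := by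
  have hlt : (2:ℕ)^n < 2^(n+1) := Nat.pow_lt_pow_right one_lt_two (by omega)
  have hmod : m % 2^(n+1) = 2^n := by
    rw [h]; exact Nat.mod_eq_of_lt hlt
  have hpos : 0 < (2:ℕ)^n := Nat.pow_pos (by norm_num)
  have hm0 : m ≠ 0 := by
    intro h0; rw [h0, Nat.zero_mod] at hmod; omega
  have hdvd : 2^n ∣ m := by
    refine ⟨2*(m / 2^(n+1)) + 1, ?_⟩
    have hd := Nat.div_add_mod m (2^(n+1))
    rw [hmod] at hd
    conv_lhs => rw [← hd]
    rw [pow_succ]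
    ring
  have hndvd : ¬ 2^(n+1) ∣ m := by
    intro hd
    have : m % 2^(n+1) = 0 := Nat.eq_zero_of_dvd_of_lt hd |> fun _ => Nat.mod_eq_zero_of_dvd hd
    omega
  have hf : m.factorization 2 = padicValNat 2 m := Nat.factorization_def m Nat.prime_two
  have le2 : n ≤ m.factorization 2 :=
    (Nat.Prime.pow_dvd_iff_le_factorization Nat.prime_two hm0).mp hdvd
  have le1 : ¬ (n+1 ≤ m.factorization 2) := fun hle =>
    hndvd ((Nat.Prime.pow_dvd_iff_le_factorization Nat.prime_two hm0).mpr hle)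
  omega

lemma oddCong {q k t : ℕ} (hq : Odd q) (h3 : 3 ≤ k) (hkodd : Odd k) (ht : 1 ≤ t) :
    T k (2^t*q) ≡ 2^(2*t-2) [MOD 2^(2*t-1)] := by
  obtain ⟨u, rfl⟩ : ∃ u, t = u + 1 := ⟨t-1, by omega⟩
  have hq1 : 1 ≤ q := hq.pos
  set x : ℕ := 2^(u+1) * q with hxdef
  have hx1 : 1 ≤ x := Nat.mul_pos (Nat.pow_pos (by norm_num)) hq1
  have hxZ : (x:ℤ) = 2^(u+1) * q := by rw [hxdef]; push_cast; ring
  have hk1even : Even (k-1) := Nat.Odd.sub_odd hkodd odd_one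
  set I : Finset ℕ := Finset.Icc (x+1) (2*x-1) with hIdef
  -- splitting off the top term
  have hsplit : ∀ j : ℕ, T j x = (∑ i ∈ I, i^j) + (2*x)^j := by
    intro j
    unfold T
    obtain ⟨y, hy⟩ : ∃ y, 2*x = y+1 := ⟨2*x-1, by omega⟩
    rw [hy, Finset.sum_Icc_succ_top (by omega), hIdef, show 2*x-1 = y by omega, ← hy]
  -- reflection
  have hrefl : (∑ i ∈ I, (3*x - i)^k) = ∑ i ∈ I, i^k := by
    apply Finset.sum_nbij' (i := fun a => 3*x - a) (j := fun a => 3*x - a) <;>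
      intro a ha <;> simp only [hIdef, Finset.mem_Icc] at ha ⊢ <;> omega
  -- cast reflection sum
  have hC2 : (∑ i ∈ I, (3*(x:ℤ) - (i:ℤ))^k) = ∑ i ∈ I, (i:ℤ)^k := by
    calc (∑ i ∈ I, (3*(x:ℤ) - (i:ℤ))^k)
        = ((∑ i ∈ I, (3*x - i)^k : ℕ) : ℤ) := by
          rw [Nat.cast_sum]
          apply Finset.sum_congr rfl
          intro i hi
          simp only [hIdef, Finset.mem_Icc] at hi
          rw [Nat.cast_pow, Nat.cast_sub (by omega)]
          push_cast
          ring
      _ = ((∑ i ∈ I, i^k : ℕ) : ℤ) := by rw [hrefl]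
      _ = ∑ i ∈ I, (i:ℤ)^k := by push_cast; rfl
  have hTkZ : (T k x : ℤ) = (∑ i ∈ I, (i:ℤ)^k) + (2*(x:ℤ))^k := by
    rw [hsplit k]; push_cast; ring
  have hTk1Z : (T (k-1) x : ℤ) = (∑ i ∈ I, (i:ℤ)^(k-1)) + (2*(x:ℤ))^(k-1) := by
    rw [hsplit (k-1)]; push_cast; ring
  -- pairwise congruence
  have hdvd9 : ((2:ℤ)^(2*u+2)) ∣ (3*(x:ℤ))^2 := by
    refine ⟨9 * (q:ℤ)^2, ?_⟩
    rw [hxZ]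
    ring
  have pair : ∀ i ∈ I, (i:ℤ)^k + (3*(x:ℤ) - (i:ℤ))^k
      ≡ (k:ℤ) * (3*(x:ℤ)) * (i:ℤ)^(k-1) [ZMOD (2:ℤ)^(2*u+2)] := by
    intro i _
    have hb := binomCong (-(i:ℤ)) (3*(x:ℤ)) k
    rw [show (-(i:ℤ) + 3*(x:ℤ)) = 3*(x:ℤ) - i by ring, Odd.neg_pow hkodd, Even.neg_pow hk1even] at hb
    have hb2 : (i:ℤ)^k + (3*(x:ℤ) - (i:ℤ))^k ≡ (i:ℤ)^k + (-(i:ℤ)^k + ↑k * (3*↑x) * (i:ℤ)^(k-1)) [ZMOD (3*(x:ℤ))^2] :=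
      hb.add_left _
    rw [show (i:ℤ)^k + (-(i:ℤ)^k + ↑k * (3*↑x) * (i:ℤ)^(k-1)) = ↑k * (3*↑x) * (i:ℤ)^(k-1) by ring] at hb2
    exact hb2.of_dvd hdvd9
  have sum1 : (∑ i ∈ I, (i:ℤ)^k) + (∑ i ∈ I, (3*(x:ℤ) - (i:ℤ))^k)
      ≡ (k:ℤ) * (3*(x:ℤ)) * (∑ i ∈ I, (i:ℤ)^(k-1)) [ZMOD (2:ℤ)^(2*u+2)] := by
    rw [← Finset.sum_add_distrib, Finset.mul_sum]
    exact sum_intModEq pair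
  -- the inner sum mod 2^(u+1)
  have hTk1cong : (T (k-1) x : ℤ) ≡ 2^u [ZMOD (2:ℤ)^(u+1)] := by
    have h := evenCong (q := q) (k := k-1) (t := u+1) hq (by omega) (Or.inr ⟨hk1even, by omega⟩)
    have := natModEq_int h
    push_cast at this
    simpa using this
  have htailk1 : ((2*(x:ℤ))^(k-1)) ≡ 0 [ZMOD (2:ℤ)^(u+1)] := by
    rw [Int.modEq_zero_iff_dvd, hxZ, show 2*((2:ℤ)^(u+1)*q) = 2^(u+2)*q by ring, mul_pow, ← pow_mul]
    refine Dvd.dvd.mul_right (pow_dvd_pow 2 ?_) _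
    calc u+1 ≤ (u+2)*2 := by omega
      _ ≤ (u+2)*(k-1) := Nat.mul_le_mul_left _ (by omega)
  have hS : (∑ i ∈ I, (i:ℤ)^(k-1)) ≡ 2^u [ZMOD (2:ℤ)^(u+1)] := by
    have h1 : (∑ i ∈ I, (i:ℤ)^(k-1)) = (T (k-1) x : ℤ) - (2*(x:ℤ))^(k-1) := by
      rw [hTk1Z]; ring
    rw [h1]
    simpa using hTk1cong.sub htailk1
  -- multiply by k*3x
  have mult : (k:ℤ) * (3*(x:ℤ)) * (∑ i ∈ I, (i:ℤ)^(k-1))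
      ≡ (k:ℤ) * (3*(x:ℤ)) * 2^u [ZMOD (2:ℤ)^(2*u+2)] := by
    obtain ⟨c, hc⟩ := hS.dvd
    apply Int.modEq_iff_dvd.mpr
    refine ⟨3 * k * q * c, ?_⟩
    rw [show (k:ℤ) * (3*↑x) * 2^u - (k:ℤ) * (3*↑x) * (∑ i ∈ I, (i:ℤ)^(k-1))
        = (k:ℤ) * (3*↑x) * (2^u - (∑ i ∈ I, (i:ℤ)^(k-1))) by ring,
      hc, hxZ]
    ring
  have htailk : 2*(2*(x:ℤ))^k ≡ 0 [ZMOD (2:ℤ)^(2*u+2)] := by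
    rw [Int.modEq_zero_iff_dvd, hxZ, show 2*((2:ℤ)^(u+1)*q) = 2^(u+2)*q by ring, mul_pow, ← pow_mul]
    refine Dvd.dvd.mul_left (Dvd.dvd.mul_right (pow_dvd_pow 2 ?_) _) _
    calc 2*u+2 ≤ (u+2)*2 := by omega
      _ ≤ (u+2)*k := Nat.mul_le_mul_left _ (by omega)
  -- combine
  have h2T : 2 * (T k x : ℤ) ≡ (3*(k:ℤ)*(q:ℤ)) * 2^(2*u+1) [ZMOD (2:ℤ)^(2*u+2)] := by
    calc 2 * (T k x : ℤ)
        = ((∑ i ∈ I, (i:ℤ)^k) + (∑ i ∈ I, (3*(x:ℤ) - (i:ℤ))^k)) + 2*(2*(x:ℤ))^k := by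
          rw [hTkZ, hC2]; ring
      _ ≡ ((k:ℤ) * (3*(x:ℤ)) * (∑ i ∈ I, (i:ℤ)^(k-1))) + 2*(2*(x:ℤ))^k [ZMOD (2:ℤ)^(2*u+2)] :=
          sum1.add_right _
      _ ≡ ((k:ℤ) * (3*(x:ℤ)) * 2^u) + 0 [ZMOD (2:ℤ)^(2*u+2)] := mult.add htailk
      _ = (3*(k:ℤ)*(q:ℤ)) * 2^(2*u+1) := by rw [hxZ]; ring
  -- divide by 2
  have hTodd : (T k x : ℤ) ≡ (3*(k:ℤ)*(q:ℤ)) * 2^(2*u) [ZMOD (2:ℤ)^(2*u+1)] := by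
    have hd := h2T.dvd
    rw [show (3*(k:ℤ)*↑q) * 2^(2*u+1) - 2*(T k x : ℤ) = 2 * ((3*(k:ℤ)*↑q) * 2^(2*u) - (T k x : ℤ)) by ring,
      show ((2:ℤ))^(2*u+2) = 2 * 2^(2*u+1) by ring] at hd
    have := (mul_dvd_mul_iff_left (a := (2:ℤ)) (by norm_num)).mp hd
    exact Int.modEq_iff_dvd.mpr this
  -- reduce odd multiplier
  have h3kq : Odd (3*k*q) := (Nat.odd_mul.mpr ⟨⟨1, rfl⟩, hkodd⟩).mul hq
  obtain ⟨v, hv⟩ := h3kq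
  have hvZ : (3*(k:ℤ)*(q:ℤ)) = 2*(v:ℤ)+1 := by exact_mod_cast congrArg (Nat.cast : ℕ → ℤ) hv
  have hfinal : (T k x : ℤ) ≡ 2^(2*u) [ZMOD (2:ℤ)^(2*u+1)] := by
    calc (T k x : ℤ) ≡ (3*(k:ℤ)*(q:ℤ)) * 2^(2*u) [ZMOD (2:ℤ)^(2*u+1)] := hTodd
      _ = 2^(2*u) + 2^(2*u+1) * v := by rw [hvZ]; ring
      _ ≡ 2^(2*u) + 0 [ZMOD (2:ℤ)^(2*u+1)] := by
          refine Int.ModEq.add_left _ (Int.modEq_zero_iff_dvd.mpr ⟨(v:ℤ), rfl⟩)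
      _ = 2^(2*u) := by ring
  rw [show 2*(u+1)-2 = 2*u by omega, show 2*(u+1)-1 = 2*u+1 by omega]
  apply (Nat.modEq_iff_dvd).mpr
  push_cast
  exact hfinal.dvd

theorem stmt_15 (q k t : ℕ) (hq : 0 < q) (hk : 0 < k) (ht : 0 < t) (hqodd : Odd q) :
    ((k = 1 ∨ Even k) → padicValNat 2 (T k (2 ^ t * q)) = t - 1) ∧
    (3 ≤ k → Odd k → padicValNat 2 (T k (2 ^ t * q)) = 2 * t - 2) := by
  constructor
  · intro h
    have hk' : k = 1 ∨ (Even k ∧ 2 ≤ k) := by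
      rcases h with h | h
      · exact Or.inl h
      · exact Or.inr ⟨h, by rcases h with ⟨m, rfl⟩; omega⟩
    have hc := evenCong hqodd ht hk'
    exact padic_of_cong (n := t-1) (by rwa [show t-1+1 = t by omega])
  · intro h3 hko
    have hc := oddCong hqodd h3 hko ht
    exact padic_of_cong (n := 2*t-2) (by rwa [show 2*t-2+1 = 2*t-1 by omega])
end

section
/- Let $x$ be a positive even integer and $k$ a positive integer. If $k = 1$ or $k$ is even, then $v_2(T_k(x)) = v_2(x) - 1$; if $k \ge 3$ is odd, then $v_2(T_k(x)) = 2 v_2(x) - 2$. -/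
open Finset

lemma sum_modEq (n : ℕ) (f g : ℕ → ℕ) (s : Finset ℕ) :
    (∀ i ∈ s, f i ≡ g i [MOD n]) → (∑ i ∈ s, f i) ≡ (∑ i ∈ s, g i) [MOD n] := by
  classical
  induction s using Finset.induction_on with
  | empty => intro _; exact Nat.ModEq.refl _
  | @insert a s ha ih =>
    intro h
    rw [Finset.sum_insert ha, Finset.sum_insert ha]
    exact Nat.ModEq.add (h a (mem_insert_self _ _)) (ih fun i hi => h i (mem_insert_of_mem hi))

lemma shift_sum (m k a : ℕ) :
    (∑ j ∈ range m, (a + j) ^ k) ≡ (∑ j ∈ range m, j ^ k) [MOD m] := by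
  induction a with
  | zero => simp only [Nat.zero_add]; exact Nat.ModEq.refl _
  | succ a ih =>
    have h1 : (∑ j ∈ range (m+1), (a + j) ^ k)
        = (∑ j ∈ range m, (a + j) ^ k) + (a + m)^k := Finset.sum_range_succ _ _
    have h2 : (∑ j ∈ range (m+1), (a + j) ^ k)
        = (∑ j ∈ range m, (a + 1 + j) ^ k) + (a + 0)^k := by
      rw [Finset.sum_range_succ' (fun j => (a + j)^k) m]
      congr 1
      apply Finset.sum_congr rfl
      intro j _
      congr 1
      omega
    simp only [Nat.add_zero] at h2
    have key : (∑ j ∈ range m, (a + 1 + j) ^ k) + a ^ k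
        = (∑ j ∈ range m, (a + j) ^ k) + (a + m)^k := by omega
    have hm : (a + m)^k ≡ a^k [MOD m] :=
      Nat.ModEq.pow k (show (a + m) % m = a % m from Nat.add_mod_right a m)
    have : (∑ j ∈ range m, (a + 1 + j) ^ k) + a ^ k
        ≡ (∑ j ∈ range m, j ^ k) + a ^ k [MOD m] := by
      rw [key]
      exact Nat.ModEq.add ih hm
    exact Nat.ModEq.add_right_cancel' _ this

lemma blocks_sum (m k : ℕ) : ∀ n a,
    (∑ i ∈ Ico a (a + n * m), i ^ k) ≡ n * (∑ j ∈ range m, j ^ k) [MOD m] := by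
  intro n
  induction n with
  | zero => intro a; simpa using Nat.ModEq.refl 0
  | succ n ih =>
    intro a
    have hm : (n+1) * m = m + n * m := by ring
    have hsplit : (∑ i ∈ Ico a (a + m), i ^ k) + (∑ i ∈ Ico (a + m) (a + (n+1) * m), i ^ k)
        = ∑ i ∈ Ico a (a + (n+1) * m), i ^ k :=
      Finset.sum_Ico_consecutive _ (by omega) (by omega)
    have h1 : (∑ i ∈ Ico a (a + m), i ^ k) ≡ (∑ j ∈ range m, j ^ k) [MOD m] := by
      rw [Finset.sum_Ico_eq_sum_range]
      have : a + m - a = m := by omega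
      rw [this]
      exact shift_sum m k a
    have h2 : (∑ i ∈ Ico (a + m) (a + (n+1) * m), i ^ k)
        ≡ n * (∑ j ∈ range m, j ^ k) [MOD m] := by
      have : a + (n+1) * m = (a + m) + n * m := by ring
      rw [this]
      exact ih (a + m)
    calc (∑ i ∈ Ico a (a + (n+1) * m), i ^ k)
        = (∑ i ∈ Ico a (a + m), i ^ k) + (∑ i ∈ Ico (a + m) (a + (n+1) * m), i ^ k) := hsplit.symm
      _ ≡ (∑ j ∈ range m, j ^ k) + n * (∑ j ∈ range m, j ^ k) [MOD m] := Nat.ModEq.add h1 h2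
      _ = (n+1) * (∑ j ∈ range m, j ^ k) := by ring
lemma R_lem (k : ℕ) (hk : k = 1 ∨ Even k) (hk1 : 0 < k) :
    ∀ v, 0 < v → (∑ r ∈ range (2^v), r ^ k) ≡ 2^(v-1) [MOD 2^v] := by
  intro v
  induction v with
  | zero => omega
  | succ v ih =>
    intro _
    rcases Nat.eq_zero_or_pos v with rfl | hv
    · -- base : range 2
      norm_num [Finset.sum_range_succ, zero_pow hk1.ne']
    · have ihv := ih hv
      have h2 : 2^(v+1) = 2^v + 2^v := by ring
      have hle : (2:ℕ)^v ≤ 2^(v+1) := Nat.pow_le_pow_right (by norm_num) (by omega)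
      have hsplit : (∑ r ∈ range (2^(v+1)), r ^ k)
          = (∑ r ∈ range (2^v), r ^ k) + ∑ j ∈ range (2^v), (2^v + j) ^ k := by
        rw [Finset.range_eq_Ico, ← Finset.sum_Ico_consecutive (fun i => i ^ k)
          (Nat.zero_le (2^v)) hle, ← Finset.range_eq_Ico,
          Finset.sum_Ico_eq_sum_range, h2, Nat.add_sub_cancel]
      have hsecond : (∑ j ∈ range (2^v), (2^v + j) ^ k)
          ≡ (∑ j ∈ range (2^v), j ^ k) [MOD 2^(v+1)] := by
        rcases hk with rfl | ⟨t, ht⟩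
        · -- k = 1
          have h1 : (∑ j ∈ range (2^v), (2^v + j) ^ 1)
              = 2^(v+1) * 2^(v-1) + ∑ j ∈ range (2^v), j ^ 1 := by
            simp only [pow_one]
            rw [Finset.sum_add_distrib, Finset.sum_const, Finset.card_range, smul_eq_mul]
            have : (2:ℕ)^v * 2^v = 2^(v+1) * 2^(v-1) := by
              rw [← pow_add, ← pow_add]
              congr 1
              omega
            rw [this]
          rw [h1]
          show (2^(v+1) * 2^(v-1) + ∑ j ∈ range (2^v), j ^ 1) % 2^(v+1)
              = (∑ j ∈ range (2^v), j ^ 1) % 2^(v+1)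
          exact Nat.mul_add_mod _ _ _
        · -- k = t + t even
          apply sum_modEq
          intro j _
          have hk2 : k = 2 * t := by omega
          rw [hk2, pow_mul, pow_mul]
          apply Nat.ModEq.pow
          have hexp : (2^v + j)^2 = j^2 + 2^(v+1) * (j + 2^(v-1)) := by
            have h2v : (2:ℕ)^v * 2^v = 2^(v+1) * 2^(v-1) := by
              rw [← pow_add, ← pow_add]; congr 1; omega
            have h2v' : 2 * 2^v = 2^(v+1) := by rw [pow_succ]; ring
            nlinarith [sq_nonneg (2^v + j)]
          rw [hexp]
          show (j^2 + 2^(v+1) * (j + 2^(v-1))) % 2^(v+1) = j^2 % 2^(v+1)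
          exact Nat.add_mul_mod_self_left _ _ _
      have h2R : (2 : ℕ) * (∑ j ∈ range (2^v), j ^ k) ≡ 2 * 2^(v-1) [MOD 2 * 2^v] :=
        Nat.ModEq.mul_left' 2 ihv
      have e1 : (2:ℕ) * 2^v = 2^(v+1) := by rw [pow_succ]; ring
      have e2 : (2:ℕ) * 2^(v-1) = 2^v := by
        rw [← pow_succ']
        congr 1
        omega
      rw [e1, e2] at h2R
      calc (∑ r ∈ range (2^(v+1)), r ^ k)
          = (∑ r ∈ range (2^v), r ^ k) + ∑ j ∈ range (2^v), (2^v + j) ^ k := hsplit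
        _ ≡ (∑ r ∈ range (2^v), r ^ k) + ∑ j ∈ range (2^v), j ^ k [MOD 2^(v+1)] :=
            Nat.ModEq.add_left _ hsecond
        _ = 2 * (∑ j ∈ range (2^v), j ^ k) := by ring
        _ ≡ 2^v [MOD 2^(v+1)] := h2R
        _ = 2^((v+1)-1) := by norm_num
lemma extract (A c t : ℕ) (hc : Odd c) (h : A ≡ c * 2^t [MOD 2^(t+1)]) :
    ∃ w, Odd w ∧ A = 2^t * w := by
  obtain ⟨s, hs⟩ := hc
  have h1 : A % 2^(t+1) = 2^t := by
    have hmod : A % 2^(t+1) = (c * 2^t) % 2^(t+1) := h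
    rw [hmod, hs]
    have he : (2*s+1) * 2^t = 2^t + 2^(t+1) * s := by
      rw [pow_succ]; ring
    rw [he, Nat.add_mul_mod_self_left]
    exact Nat.mod_eq_of_lt (by
      have := Nat.pow_lt_pow_right (a := 2) (by norm_num) (Nat.lt_succ_self t)
      simpa using this)
  refine ⟨2 * (A / 2^(t+1)) + 1, ⟨A / 2^(t+1), by ring⟩, ?_⟩
  have hd := Nat.div_add_mod A (2^(t+1))
  rw [h1] at hd
  have hkey : 2^t * (2 * (A / 2^(t+1)) + 1) = 2^(t+1) * (A / 2^(t+1)) + 2^t := by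
    rw [pow_succ]; ring
  omega

lemma pval_two_pow_mul (a w : ℕ) (hw : Odd w) : padicValNat 2 (2^a * w) = a := by
  haveI : Fact (Nat.Prime 2) := ⟨Nat.prime_two⟩
  have hnd : ¬ 2 ∣ w := by
    obtain ⟨c, rfl⟩ := hw
    omega
  have hw0 : w ≠ 0 := by rintro rfl; exact hnd ⟨0, rfl⟩
  rw [padicValNat.mul (pow_ne_zero _ two_ne_zero) hw0, padicValNat.prime_pow,
    padicValNat.eq_zero_of_not_dvd hnd, add_zero]

lemma TB (x k v u : ℕ) (hv : 0 < v) (hu : Odd u) (hxeq : x = 2^v * u)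
    (hk : k = 1 ∨ Even k) (hk1 : 0 < k) :
    ∃ w, Odd w ∧ T k x = 2^(v-1) * w := by
  have h2x : 2 * x + 1 = (x+1) + u * 2^v := by rw [hxeq]; ring
  have hT : T k x = ∑ i ∈ Ico (x+1) ((x+1) + u * 2^v), i ^ k := by
    rw [T, ← Finset.Ico_add_one_right_eq_Icc, h2x]
  have hmod : T k x ≡ u * (∑ j ∈ range (2^v), j ^ k) [MOD 2^v] := by
    rw [hT]; exact blocks_sum (2^v) k u (x+1)
  have hmod2 : T k x ≡ u * 2^(v-1) [MOD 2^v] :=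
    hmod.trans (Nat.ModEq.mul_left u (R_lem k hk hk1 v hv))
  apply extract _ _ _ hu
  have : v - 1 + 1 = v := by omega
  rw [this]
  exact hmod2

lemma add_pow_of_sq_eq_zero {R : Type*} [CommRing R] (a b : R) (hb : b^2 = 0) (k : ℕ) :
    (a + b)^k = a^k + (k : R) * a^(k-1) * b := by
  induction k with
  | zero => simp
  | succ n ih =>
    rcases Nat.eq_zero_or_pos n with rfl | hn
    · simp
    · have hbb : b * b = 0 := by rw [← sq]; exact hb
      have han : a^(n-1) * a = a^n := by
        rw [← pow_succ]
        congr 1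
        omega
      have hsucc : (n+1 : ℕ) - 1 = n := rfl
      rw [pow_succ, ih, hsucc]
      push_cast
      have expand : (a^n + (n:R) * a^(n-1) * b) * (a + b)
          = a^(n+1) + a^n * b + (n:R) * (a^(n-1) * a) * b + (n:R) * a^(n-1) * (b*b) := by ring
      rw [expand, han, hbb]
      ring

lemma TCong (x k v : ℕ) (hx1 : 0 < x) (hx2 : 2^(2*v) ∣ x^2)
    (hkodd : Odd k) (hk3 : 3 ≤ k) :
    2 * T k x ≡ 3 * k * x * T (k-1) x [MOD 2^(2*v)] := by
  rw [← ZMod.natCast_eq_natCast_iff]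
  set R := ZMod (2^(2*v)) with hR
  -- x^2 = 0 in R
  have hX2 : (x : R)^2 = 0 := by
    obtain ⟨c, hc⟩ := hx2
    have h0 : ((2^(2*v) : ℕ) : R) = 0 := ZMod.natCast_self _
    have : ((x^2 : ℕ) : R) = ((2^(2*v) * c : ℕ) : R) := by rw [hc]
    push_cast at this h0 ⊢
    rw [this, Nat.cast_mul, ZMod.natCast_self, zero_mul]
  have hXk : ∀ j, 2 ≤ j → (x : R)^j = 0 := by
    intro j hj
    have : (x:R)^j = (x:R)^2 * (x:R)^(j-2) := by
      rw [← pow_add]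
      congr 1
      omega
    rw [this, hX2, zero_mul]
  have hkeven : Even (k - 1) := by
    obtain ⟨t, ht⟩ := hkodd
    exact ⟨t, by omega⟩
  -- per-term
  have hterm : ∀ i ∈ Icc (x+1) (2*x-1),
      (((3*x - i : ℕ)) : R)^k = -((i:R))^k + 3 * k * (x:R) * ((i:R))^(k-1) := by
    intro i hi
    rw [Finset.mem_Icc] at hi
    have hle : i ≤ 3*x := by omega
    have hcast : (((3*x - i : ℕ)) : R) = -(i:R) + 3*(x:R) := by
      rw [Nat.cast_sub hle, Nat.cast_mul, Nat.cast_ofNat]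
      ring
    have hb2 : (3*(x:R))^2 = 0 := by
      rw [mul_pow, hX2, mul_zero]
    rw [hcast, add_pow_of_sq_eq_zero _ _ hb2, Odd.neg_pow hkodd, Even.neg_pow hkeven]
    push_cast
    ring
  -- reflection
  have hrefl : ∑ i ∈ Icc (x+1) (2*x-1), ((i:R))^k
      = ∑ i ∈ Icc (x+1) (2*x-1), (((3*x - i : ℕ)) : R)^k := by
    apply Finset.sum_nbij' (fun i => 3*x - i) (fun i => 3*x - i)
    · intro i hi; rw [Finset.mem_Icc] at hi ⊢; omega
    · intro i hi; rw [Finset.mem_Icc] at hi ⊢; omega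
    · intro i hi; rw [Finset.mem_Icc] at hi; omega
    · intro i hi; rw [Finset.mem_Icc] at hi; omega
    · intro i hi
      rw [Finset.mem_Icc] at hi
      congr 2
      omega
  -- double sum
  have hdouble : 2 * (∑ i ∈ Icc (x+1) (2*x-1), ((i:R))^k)
      = 3 * k * (x:R) * ∑ i ∈ Icc (x+1) (2*x-1), ((i:R))^(k-1) := by
    calc 2 * (∑ i ∈ Icc (x+1) (2*x-1), ((i:R))^k)
        = (∑ i ∈ Icc (x+1) (2*x-1), ((i:R))^k)
          + ∑ i ∈ Icc (x+1) (2*x-1), (((3*x - i : ℕ)) : R)^k := by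
          rw [← hrefl]; ring
      _ = ∑ i ∈ Icc (x+1) (2*x-1), (((i:R))^k + (((3*x - i : ℕ)) : R)^k) :=
          Finset.sum_add_distrib.symm
      _ = ∑ i ∈ Icc (x+1) (2*x-1), 3 * k * (x:R) * ((i:R))^(k-1) := by
          apply Finset.sum_congr rfl
          intro i hi
          rw [hterm i hi]
          ring
      _ = 3 * k * (x:R) * ∑ i ∈ Icc (x+1) (2*x-1), ((i:R))^(k-1) := by
          rw [Finset.mul_sum]
  -- splitting off the top term
  have htop : ∀ m : ℕ, 2 ≤ m → ∑ i ∈ Icc (x+1) (2*x), ((i:R))^m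
      = ∑ i ∈ Icc (x+1) (2*x-1), ((i:R))^m := by
    intro m hm
    have h2x : 2*x = (2*x - 1) + 1 := by omega
    rw [h2x, Finset.sum_Icc_succ_top (by omega : x + 1 ≤ (2*x-1) + 1)]
    have : (((2*x - 1 + 1 : ℕ)) : R)^m = 0 := by
      have he : (2*x - 1 + 1 : ℕ) = 2 * x := by omega
      rw [he]
      rw [Nat.cast_mul, Nat.cast_ofNat, mul_pow, hXk m hm, mul_zero]
    rw [this, add_zero, Nat.add_sub_cancel]
  have hTcast : ((T k x : ℕ) : R) = ∑ i ∈ Icc (x+1) (2*x), ((i:R))^k := by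
    rw [T, Nat.cast_sum]; simp only [Nat.cast_pow]
  have hTcast' : ((T (k-1) x : ℕ) : R) = ∑ i ∈ Icc (x+1) (2*x), ((i:R))^(k-1) := by
    rw [T, Nat.cast_sum]; simp only [Nat.cast_pow]
  push_cast
  rw [hTcast, hTcast', htop k (by omega), htop (k-1) (by omega), hdouble]

theorem stmt_16 (x k : ℕ) (hx : 0 < x) (hxeven : Even x) (hk : 0 < k) :
    ((k = 1 ∨ Even k) → padicValNat 2 (T k x) = padicValNat 2 x - 1) ∧
    (3 ≤ k → Odd k → padicValNat 2 (T k x) = 2 * padicValNat 2 x - 2) := by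
  have hx0 : x ≠ 0 := hx.ne'
  set v := padicValNat 2 x with hvdef
  set u := x / 2 ^ (Nat.factorization x 2) with hudef
  have hfac : Nat.factorization x 2 = v := Nat.factorization_def x Nat.prime_two
  have hxeq : x = 2 ^ v * u := by
    rw [hudef, hfac, ← hfac]
    exact (Nat.ordProj_mul_ordCompl_eq_self x 2).symm
  have hund : ¬ 2 ∣ u := by
    rw [hudef]
    exact Nat.not_dvd_ordCompl Nat.prime_two hx0
  have hu : Odd u := Nat.odd_iff.mpr (by omega)
  have hv : 0 < v := by
    by_contra h
    have hv0 : v = 0 := by omega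
    rw [hv0, pow_zero, one_mul] at hxeq
    obtain ⟨c, hc⟩ := hxeven
    exact hund ⟨c, by omega⟩
  constructor
  · intro hcase
    obtain ⟨w, hw, hTw⟩ := TB x k v u hv hu hxeq hcase hk
    rw [hTw, pval_two_pow_mul _ _ hw]
  · intro hk3 hkodd
    have hkeven : Even (k - 1) := by
      obtain ⟨t, ht⟩ := hkodd
      exact ⟨t, by omega⟩
    obtain ⟨w, hw, hTw⟩ := TB x (k-1) v u hv hu hxeq (Or.inr hkeven) (by omega)
    have hx2 : 2^(2*v) ∣ x^2 := ⟨u^2, by rw [hxeq]; ring⟩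
    have hcong := TCong x k v hx hx2 hkodd hk3
    have hrhs : 3 * k * x * T (k-1) x = (3 * k * u * w) * 2^(2*v-1) := by
      rw [hTw, hxeq]
      have hp : (2:ℕ)^v * 2^(v-1) = 2^(2*v-1) := by
        rw [← pow_add]
        congr 1
        omega
      calc 3 * k * (2^v * u) * (2^(v-1) * w)
          = 3 * k * u * w * (2^v * 2^(v-1)) := by ring
        _ = 3 * k * u * w * 2^(2*v-1) := by rw [hp]
    rw [hrhs] at hcong
    have hc : Odd (3 * k * u * w) :=
      (((by decide : Odd 3).mul hkodd).mul hu).mul hw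
    have h2v : 2*v - 1 + 1 = 2*v := by omega
    rw [← h2v] at hcong
    obtain ⟨w', hw', h2T⟩ := extract _ _ _ hc hcong
    have hT : T k x = 2^(2*v-2) * w' := by
      have he : (2:ℕ)^(2*v-1) = 2 * 2^(2*v-2) := by
        rw [← pow_succ']
        congr 1
        omega
      rw [he] at h2T
      have : 2 * T k x = 2 * (2^(2*v-2) * w') := by rw [h2T]; ring
      omega
    rw [hT, pval_two_pow_mul _ _ hw']
end

section
/- Let $x$ be a positive odd integer. Then $v_2(T_1(x)) = v_2(3x+1) - 1$. Moreover, for every positive integer $k$, if $x \equiv 3 \pmod{8}$ or $x \equiv 7 \pmod{8}$, then $v_2(T_k(x)) = 0$. -/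
lemma T_one_mul_two (x : ℕ) : T 1 x * 2 = x * (3 * x + 1) := by
  have h3 : (∑ i ∈ Finset.range (x + 1), i) + T 1 x = ∑ i ∈ Finset.range (2 * x + 1), i := by
    unfold T
    simp only [pow_one]
    rw [Finset.range_eq_Ico, Finset.range_eq_Ico, ← Finset.Ico_add_one_right_eq_Icc (x + 1) (2 * x)]
    exact Finset.sum_Ico_consecutive (fun i : ℕ => i) (m := 0) (n := x + 1) (k := 2 * x + 1) (by omega) (by omega)
  have h1 := Finset.sum_range_id_mul_two (2 * x + 1)
  have h2 := Finset.sum_range_id_mul_two (x + 1)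
  simp only [Nat.add_sub_cancel] at h1 h2
  nlinarith [h1, h2, h3]

lemma zmod2_pow (a : ZMod 2) (k : ℕ) (hk : 0 < k) : a ^ k = a := by
  induction k with
  | zero => omega
  | succ n ih =>
    rcases Nat.eq_zero_or_pos n with h | h
    · subst h; simp
    · rw [pow_succ, ih h]
      clear ih; revert a; decide

theorem stmt_17 (x : ℕ) (hx : 0 < x) (hxodd : Odd x) :
    padicValNat 2 (T 1 x) = padicValNat 2 (3 * x + 1) - 1 ∧
    (∀ k : ℕ, 0 < k → (x % 8 = 3 ∨ x % 8 = 7) → padicValNat 2 (T k x) = 0) := by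
  have key := T_one_mul_two x
  have hT1pos : 0 < T 1 x := by nlinarith
  constructor
  · have hxne : x ≠ 0 := hx.ne'
    have h1 : padicValNat 2 (T 1 x * 2) = padicValNat 2 (T 1 x) + 1 := by
      rw [padicValNat.mul hT1pos.ne' (by norm_num)]
      simp [padicValNat.self]
    have h2 : padicValNat 2 (x * (3 * x + 1)) =
        padicValNat 2 x + padicValNat 2 (3 * x + 1) := by
      exact padicValNat.mul hxne (by omega)
    have hxo : x % 2 = 1 := Nat.odd_iff.mp hxodd
    have hvx : padicValNat 2 x = 0 := padicValNat.eq_zero_of_not_dvd (by omega)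
    rw [key, h2, hvx] at h1
    omega
  · intro k hk hmod
    -- T 1 x is odd
    have hT1odd : T 1 x % 2 = 1 := by
      have h4 : (3 * x + 1) % 4 = 2 := by omega
      obtain ⟨m, hm⟩ : ∃ m, 3 * x + 1 = 2 * m := ⟨(3 * x + 1) / 2, by omega⟩
      have hmodd : m % 2 = 1 := by omega
      have : T 1 x = x * m := by nlinarith
      have hxo : x % 2 = 1 := Nat.odd_iff.mp hxodd
      rw [this, Nat.mul_mod, hxo, hmodd]
    -- T k x ≡ T 1 x mod 2
    have hcast : ((T k x : ZMod 2)) = ((T 1 x : ZMod 2)) := by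
      unfold T
      push_cast
      apply Finset.sum_congr rfl
      intro i _
      rw [zmod2_pow _ k hk, zmod2_pow _ 1 one_pos]
    have hTk : ¬ (2 ∣ T k x) := by
      intro hdvd
      have : ((T k x : ZMod 2)) = 0 := (ZMod.natCast_eq_zero_iff _ _).mpr hdvd
      rw [hcast] at this
      have : 2 ∣ T 1 x := (ZMod.natCast_eq_zero_iff _ _).mp this
      omega
    exact padicValNat.eq_zero_of_not_dvd hTk
end
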